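/- arXiv:1207.5211 — 6 statements merged into one kernel-verified Lean document; each statement's English description precedes it below -/
import Mathlib

section
/- Let V be a finite type, G a simple graph on V, s an element of ZMod 3, and w : ZMod 3 → V an injective map. Suppose there are three walks Q_0, Q_1, Q_2 in G such that for every j ∈ ZMod 3: (i) Q_j is a walk of length at least 1 from w(j) to w(j + s) whose vertices are pairwise distinct, except that its first and last vertex coincide when s = 0; (ii) no vertex w(j') (j' ∈ ZMod 3) occurs as an internal vertex of any Q_j; (iii) for j ≠ j', the walks Q_j and Q_{j'} have no common internal vertices; (iv) every vertex of V lies on some Q_j; (v) every edge of G lies on some Q_j. Then G has a Hamiltonian cycle if and only if s ≠ 0. -/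
/-- The internal vertices of a walk: its vertices other than the first and the last. -/
def SimpleGraph.Walk.interior {V : Type*} {G : SimpleGraph V} {u v : V}
    (p : G.Walk u v) : List V := p.support.tail.dropLast

private lemma tail_eq_interior_append {V : Type*} {G : SimpleGraph V} {u v : V}
    (p : G.Walk u v) (h : 1 ≤ p.length) :
    p.support.tail = p.interior ++ [v] := by
  have hne : p.support.tail ≠ [] := by
    apply List.ne_nil_of_length_pos
    rw [List.length_tail, SimpleGraph.Walk.length_support]
    omega
  have hlast : p.support.tail.getLast hne = v := by
    rw [List.getLast_tail, p.getLast_support]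
  conv_lhs => rw [← List.dropLast_append_getLast hne]
  rw [hlast]
  rfl

private lemma end_mem_of_closed {V : Type*} {G : SimpleGraph V} (S : V → Prop)
    (hS : ∀ x y, G.Adj x y → S x → S y) :
    ∀ {u v : V} (_ : G.Walk u v), S u → S v := by
  intro u v p
  induction p with
  | nil => exact id
  | cons h _ ih => exact fun hu => ih (hS _ _ h hu)

theorem three_paths_hamiltonian_iff
    {V : Type*} [Fintype V] [DecidableEq V] (G : SimpleGraph V) (s : ZMod 3)
    (w : ZMod 3 → V) (hw : Function.Injective w)
    (Q : ∀ j : ZMod 3, G.Walk (w j) (w (j + s)))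
    -- (i) each `Q j` has length at least 1, and its vertices are pairwise distinct,
    -- except that its first and last vertex coincide when `s = 0`
    (hlen : ∀ j, 1 ≤ (Q j).length)
    (hpath : s ≠ 0 → ∀ j, (Q j).IsPath)
    (hcirc : s = 0 → ∀ j, (Q j).support.tail.Nodup)
    -- (ii) no `w j'` is an internal vertex of any `Q j`
    (hterm : ∀ j j' : ZMod 3, w j' ∉ (Q j).interior)
    -- (iii) distinct walks share no internal vertices
    (hdisj : ∀ j j' : ZMod 3, j ≠ j' →
      ∀ x : V, x ∈ (Q j).interior → x ∉ (Q j').interior)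
    -- (iv) every vertex lies on some `Q j`
    (hvert : ∀ x : V, ∃ j, x ∈ (Q j).support)
    -- (v) every edge lies on some `Q j`
    (hedge : ∀ e ∈ G.edgeSet, ∃ j, e ∈ (Q j).edges) :
    (∃ (a : V) (c : G.Walk a a), c.IsHamiltonianCycle) ↔ s ≠ 0 := by
  have hT : ∀ j, (Q j).support.tail = (Q j).interior ++ [w (j + s)] :=
    fun j => tail_eq_interior_append _ (hlen j)
  constructor
  · rintro ⟨a, c, hc⟩ hs
    subst hs
    -- membership in support characterization
    have hmem : ∀ (j : ZMod 3) (x : V), x ∈ (Q j).support →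
        x = w j ∨ x ∈ (Q j).interior := by
      intro j x hx
      rw [(Q j).support_eq_cons, List.mem_cons, hT j, List.mem_append,
        List.mem_singleton] at hx
      rcases hx with h | h | h
      · exact Or.inl h
      · exact Or.inr h
      · exact Or.inl (by rw [h, add_zero])
    have hdisj2 : ∀ (j j' : ZMod 3), j ≠ j' →
        ∀ x, x ∈ (Q j).support → x ∉ (Q j').support := by
      intro j j' hjj x hx hx'
      rcases hmem j x hx with rfl | h
      · rcases hmem j' (w j) hx' with h' | h'
        · exact hjj (hw h')
        · exact hterm j' j h'
      · rcases hmem j' x hx' with rfl | h'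
        · exact hterm j j' h
        · exact hdisj j j' hjj x h h'
    have hclosed : ∀ x y, G.Adj x y → x ∈ (Q 0).support → y ∈ (Q 0).support := by
      intro x y hxy hx
      obtain ⟨j, hj⟩ := hedge s(x, y) hxy
      have hxj := (Q j).fst_mem_support_of_mem_edges hj
      have hyj := (Q j).snd_mem_support_of_mem_edges hj
      by_cases h0 : j = 0
      · subst h0; exact hyj
      · exact absurd hx (hdisj2 j 0 h0 x hxj)
    have h01 : w 1 ∈ (Q 0).support := by
      have ha := hc.mem_support (w 0)
      have hb := hc.mem_support (w 1)
      exact end_mem_of_closed (· ∈ (Q 0).support) hclosed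
        ((c.takeUntil (w 0) ha).reverse.append (c.takeUntil (w 1) hb))
        (Q 0).start_mem_support
    rcases hmem 0 (w 1) h01 with h | h
    · exact absurd (hw h) (by decide)
    · exact hterm 0 1 h
  · intro hs
    obtain ⟨h3s, hnss, hss0, hcover⟩ :=
      (by decide : ∀ t : ZMod 3, t ≠ 0 → t + t + t = 0 ∧ t ≠ t + t ∧ t + t ≠ 0 ∧
        ∀ j : ZMod 3, j = 0 ∨ j = t ∨ j = t + t) s hs
    have hpath := hpath hs
    let c : G.Walk (w 0) (w 0) :=
      ((Q 0).copy rfl (by rw [zero_add])).append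
        ((Q s).append ((Q (s + s)).copy rfl (by rw [h3s])))
    refine ⟨w 0, c, ?_⟩
    have hsupp : c.support.tail =
        (Q 0).support.tail ++ ((Q s).support.tail ++ (Q (s + s)).support.tail) := by
      simp only [c, SimpleGraph.Walk.tail_support_append, SimpleGraph.Walk.support_copy]
    have hnodupT : ∀ j, (Q j).support.tail.Nodup :=
      fun j => ((hpath j).support_nodup).tail
    have hdisjT : ∀ j j', j ≠ j' →
        ∀ x ∈ (Q j).support.tail, x ∉ (Q j').support.tail := by
      intro j j' hjj x hx hx'
      rw [hT j, List.mem_append, List.mem_singleton] at hx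
      rw [hT j', List.mem_append, List.mem_singleton] at hx'
      rcases hx with hx | hx <;> rcases hx' with hx' | hx'
      · exact hdisj j j' hjj x hx hx'
      · exact hterm j (j' + s) (hx' ▸ hx)
      · exact hterm j' (j + s) (hx ▸ hx')
      · exact hjj (by have := hw (hx.symm.trans hx'); exact add_right_cancel this)
    have hnodup : c.support.tail.Nodup := by
      rw [hsupp, List.nodup_append, List.nodup_append]
      refine ⟨hnodupT 0, ⟨hnodupT s, hnodupT (s + s), fun x hx y hy hxy => hdisjT s (s + s) hnss x hx (hxy ▸ hy)⟩, ?_⟩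
      intro x hx y hx' hxy; subst hxy
      rcases List.mem_append.1 hx' with h | h
      · exact hdisjT 0 s (Ne.symm hs) x hx h
      · exact hdisjT 0 (s + s) (Ne.symm hss0) x hx h
    have hlastmem : ∀ j, w (j + s) ∈ (Q j).support.tail := by
      intro j; rw [hT j]; simp
    have hmemtail : ∀ x, x ∈ c.support.tail := by
      intro x
      obtain ⟨j, hj⟩ := hvert x
      rw [hsupp]
      simp only [List.mem_append]
      rw [(Q j).support_eq_cons, List.mem_cons] at hj
      rcases hj with rfl | hxt
      · rcases hcover j with h | h | h
        · refine Or.inr (Or.inr ?_)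
          have hwj : w j = w (s + s + s) := by rw [h, h3s]
          rw [hwj]; exact hlastmem (s + s)
        · refine Or.inl ?_
          have hwj : w j = w (0 + s) := by rw [h, zero_add]
          rw [hwj]; exact hlastmem 0
        · refine Or.inr (Or.inl ?_)
          have hwj : w j = w (s + s) := by rw [h]
          rw [hwj]; exact hlastmem s
      · rcases hcover j with h | h | h
        · exact Or.inl (h ▸ hxt)
        · exact Or.inr (Or.inl (h ▸ hxt))
        · exact Or.inr (Or.inr (h ▸ hxt))
    -- edges
    have hedgesc : c.edges = (Q 0).edges ++ ((Q s).edges ++ (Q (s + s)).edges) := by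
      simp only [c, SimpleGraph.Walk.edges_append, SimpleGraph.Walk.edges_copy]
    have hclass : ∀ (k : ZMod 3) (z : V), z ∈ (Q k).support →
        z ∈ (Q k).interior ∨ z = w k ∨ z = w (k + s) := by
      intro k z hz
      rw [(Q k).support_eq_cons, List.mem_cons, hT k, List.mem_append,
        List.mem_singleton] at hz
      tauto
    have hEdisj : ∀ j j', j ≠ j' → ∀ e ∈ (Q j).edges, e ∉ (Q j').edges := by
      intro j j' hjj e he he'
      induction e with
      | h x y =>
      have hne : x ≠ y := ((Q j).adj_of_mem_edges he).ne
      have hep : ∀ z : V, z ∈ (Q j).support → z ∈ (Q j').support →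
          ∃ p : ZMod 3, z = w p ∧ (p = j ∨ p = j + s) ∧ (p = j' ∨ p = j' + s) := by
        intro z hz hz'
        rcases hclass j z hz with h | h | h
        · rcases hclass j' z hz' with h' | h' | h'
          · exact absurd h' (hdisj j j' hjj z h)
          · exact absurd (h' ▸ h) (hterm j j')
          · exact absurd (h' ▸ h) (hterm j (j' + s))
        · refine ⟨j, h, Or.inl rfl, ?_⟩
          rcases hclass j' z hz' with h' | h' | h'
          · exact absurd (h ▸ h') (hterm j' j)
          · exact Or.inl (hw (h.symm.trans h'))
          · exact Or.inr (hw (h.symm.trans h'))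
        · refine ⟨j + s, h, Or.inr rfl, ?_⟩
          rcases hclass j' z hz' with h' | h' | h'
          · exact absurd (h ▸ h') (hterm j' (j + s))
          · exact Or.inl (hw (h.symm.trans h'))
          · exact Or.inr (hw (h.symm.trans h'))
      obtain ⟨px, hpx, hpx1, hpx2⟩ := hep x ((Q j).fst_mem_support_of_mem_edges he)
        ((Q j').fst_mem_support_of_mem_edges he')
      obtain ⟨py, hpy, hpy1, hpy2⟩ := hep y ((Q j).snd_mem_support_of_mem_edges he)
        ((Q j').snd_mem_support_of_mem_edges he')
      have hpq : px = py :=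
        (by decide : ∀ t a b p q : ZMod 3, t ≠ 0 → a ≠ b →
          (p = a ∨ p = a + t) → (p = b ∨ p = b + t) →
          (q = a ∨ q = a + t) → (q = b ∨ q = b + t) → p = q)
          s j j' px py hs hjj hpx1 hpx2 hpy1 hpy2
      exact hne (by rw [hpx, hpy, hpq])
    have htrail : c.IsTrail := by
      rw [SimpleGraph.Walk.isTrail_def, hedgesc, List.nodup_append, List.nodup_append]
      refine ⟨(hpath 0).edges_nodup, ⟨(hpath s).edges_nodup, (hpath (s + s)).edges_nodup,
        fun x hx y hy hxy => hEdisj s (s + s) hnss x hx (hxy ▸ hy)⟩, ?_⟩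
      intro e he y he' hxy; subst hxy
      rcases List.mem_append.1 he' with h | h
      · exact hEdisj 0 s (Ne.symm hs) e he h
      · exact hEdisj 0 (s + s) (Ne.symm hss0) e he h
    have hnil : c ≠ SimpleGraph.Walk.nil := by
      intro h
      have hl : c.length = 0 := by rw [h]; rfl
      have : 1 ≤ c.length := by
        simp only [c, SimpleGraph.Walk.length_append, SimpleGraph.Walk.length_copy]
        have := hlen 0; omega
      omega
    rw [SimpleGraph.Walk.isHamiltonianCycle_iff_isCycle_and_support_count_tail_eq_one]
    refine ⟨?_, fun a => List.count_eq_one_of_mem hnodup (hmemtail a)⟩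
    rw [SimpleGraph.Walk.isCycle_def]
    exact ⟨htrail, hnil, hnodup⟩
end

section
/- Let n ≥ 2, let V be a finite type, G a simple graph on V, v : Fin (n+1) × ZMod 3 → V an injective map (its values are called terminals), and z : Fin n → ZMod 3. Suppose that for every i ∈ Fin n and j ∈ ZMod 3 there is a path Q_{i,j} in G of length at least 1 from v(i, j) to v(i+1, j + z(i)) such that: no terminal v(i', j') occurs as an internal vertex of any Q_{i,j}; any two distinct paths Q_{i,j} and Q_{i',j'} have no common internal vertices; every vertex of V lies on some Q_{i,j}; and every edge of G lies on some Q_{i,j}. Then for every j ∈ ZMod 3 there is a path P_j in G from v(0, j) to v(n, j + Σ_{i ∈ Fin n} z(i)), and the three paths P_0, P_1, P_2 can be chosen pairwise vertex-disjoint so that together they contain every vertex of V and every edge of G. -/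
namespace SimpleGraph.Walk

variable {V : Type*} {G : SimpleGraph V} {u w : V}

theorem tail_support_ne_nil (p : G.Walk u w) (hl : 1 ≤ p.length) :
    p.support.tail ≠ [] := by
  intro h
  have h2 := congrArg List.length h
  simp only [List.length_tail, p.length_support, List.length_nil] at h2
  omega

theorem tail_support_eq (p : G.Walk u w) (hl : 1 ≤ p.length) :
    p.support.tail = p.interior ++ [w] := by
  have hs : p.support.getLast? = some w := by
    rw [List.getLast?_eq_getLast p.support_ne_nil, p.getLast_support]
  obtain ⟨ys, hys⟩ := List.getLast?_eq_some_iff.1 hs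
  have hy : ys ≠ [] := by
    rintro rfl
    have := p.length_support
    rw [hys] at this
    simp only [List.nil_append, List.length_singleton] at this
    omega
  rw [SimpleGraph.Walk.interior, hys, List.tail_append_of_ne_nil hy]
  simp

theorem mem_support_trichotomy {x : V} (p : G.Walk u w) (hl : 1 ≤ p.length) :
    x ∈ p.support ↔ x = u ∨ x ∈ p.interior ∨ x = w := by
  rw [p.support_eq_cons, List.mem_cons, p.tail_support_eq hl, List.mem_append,
    List.mem_singleton]

theorem isPath_append' {x : V} {p : G.Walk u w} {q : G.Walk w x} (hp : p.IsPath)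
    (hq : q.IsPath) (h : ∀ y, y ∈ p.support → y ∈ q.support → y = w) :
    (p.append q).IsPath := by
  rw [isPath_def, support_append, List.nodup_append]
  refine ⟨hp.support_nodup, ?_, ?_⟩
  · have := hq.support_nodup
    rw [q.support_eq_cons] at this
    exact this.of_cons
  · intro y hy y' hy' hyy'
    subst hyy'
    have hyq : y ∈ q.support := by rw [q.support_eq_cons]; exact List.mem_cons_of_mem _ hy'
    have := h y hy hyq
    subst this
    have := hq.support_nodup
    rw [q.support_eq_cons, List.nodup_cons] at this
    exact this.1 hy'

end SimpleGraph.Walk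

section Gadget

variable {n : ℕ} {V : Type*} {G : SimpleGraph V}
  {z : Fin n → ZMod 3}

/-- `z` extended to `ℕ`. -/
def gz (z : Fin n → ZMod 3) : ℕ → ZMod 3 := fun i => if h : i < n then z ⟨i, h⟩ else 0

/-- partial sums of `z`. -/
def gs (z : Fin n → ZMod 3) (m : ℕ) : ZMod 3 := ∑ i ∈ Finset.range m, gz z i

lemma gs_zero : gs z 0 = 0 := by simp [gs]

lemma gs_succ {m : ℕ} (h : m < n) : gs z (m + 1) = gs z m + z ⟨m, h⟩ := by
  simp [gs, Finset.sum_range_succ, gz, dif_pos h]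

lemma gs_total : gs z n = ∑ i, z i := by
  rw [gs, ← Fin.sum_univ_eq_sum_range]
  exact Finset.sum_congr rfl fun i _ => by simp [gz, i.isLt]

variable (v : Fin (n + 1) × ZMod 3 → V)
  (Q : ∀ (i : Fin n) (j : ZMod 3), G.Walk (v (i.castSucc, j)) (v (i.succ, j + z i)))

/-- the concatenated walk up to stage `m`. -/
def gW (j : ZMod 3) : ∀ (m : ℕ) (h : m ≤ n),
    G.Walk (v (0, j)) (v (⟨m, Nat.lt_succ_of_le h⟩, j + gs z m))
  | 0, _ => SimpleGraph.Walk.nil.copy rfl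
      (congrArg v (by rw [gs_zero, add_zero, Fin.mk_zero]))
  | m + 1, h => (gW j m (Nat.le_of_succ_le h)).append
      ((Q ⟨m, h⟩ (j + gs z m)).copy
        (congrArg v (by rw [Fin.castSucc_mk]))
        (congrArg v (by rw [Fin.succ_mk, gs_succ h, ← add_assoc])))

lemma gW_zero (j : ZMod 3) (h : 0 ≤ n) : gW v Q j 0 h = SimpleGraph.Walk.nil.copy rfl
      (congrArg v (by rw [gs_zero, add_zero, Fin.mk_zero])) := rfl

lemma gW_succ (j : ZMod 3) (m : ℕ) (h : m + 1 ≤ n) :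
    gW v Q j (m + 1) h = (gW v Q j m (Nat.le_of_succ_le h)).append
      ((Q ⟨m, h⟩ (j + gs z m)).copy
        (congrArg v (by rw [Fin.castSucc_mk]))
        (congrArg v (by rw [Fin.succ_mk, gs_succ h, ← add_assoc]))) := rfl

lemma gW_support (j : ZMod 3) (m : ℕ) (h : m ≤ n) (x : V) :
    x ∈ (gW v Q j m h).support ↔
      x = v (0, j) ∨ ∃ k, ∃ hk : k < n, k < m ∧ x ∈ (Q ⟨k, hk⟩ (j + gs z k)).support := by
  induction m with
  | zero => rw [gW_zero, SimpleGraph.Walk.support_copy]; simp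
  | succ m ih =>
    rw [gW_succ, SimpleGraph.Walk.mem_support_append_iff, ih (Nat.le_of_succ_le h),
      SimpleGraph.Walk.support_copy]
    constructor
    · rintro ((h1 | ⟨k, hk, hkm, h2⟩) | h3)
      · exact Or.inl h1
      · exact Or.inr ⟨k, hk, Nat.lt_succ_of_lt hkm, h2⟩
      · exact Or.inr ⟨m, h, Nat.lt_succ_self m, h3⟩
    · rintro (h1 | ⟨k, hk, hkm, h2⟩)
      · exact Or.inl (Or.inl h1)
      · rcases Nat.lt_succ_iff_lt_or_eq.mp hkm with hlt | rfl
        · exact Or.inl (Or.inr ⟨k, hk, hlt, h2⟩)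
        · exact Or.inr h2

lemma gW_edges (j : ZMod 3) (m : ℕ) (h : m ≤ n) (e : Sym2 V) :
    e ∈ (gW v Q j m h).edges ↔
      ∃ k, ∃ hk : k < n, k < m ∧ e ∈ (Q ⟨k, hk⟩ (j + gs z k)).edges := by
  induction m with
  | zero => rw [gW_zero, SimpleGraph.Walk.edges_copy]; simp
  | succ m ih =>
    rw [gW_succ, SimpleGraph.Walk.edges_append, List.mem_append, ih (Nat.le_of_succ_le h),
      SimpleGraph.Walk.edges_copy]
    constructor
    · rintro (⟨k, hk, hkm, h2⟩ | h3)
      · exact ⟨k, hk, Nat.lt_succ_of_lt hkm, h2⟩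
      · exact ⟨m, h, Nat.lt_succ_self m, h3⟩
    · rintro ⟨k, hk, hkm, h2⟩
      rcases Nat.lt_succ_iff_lt_or_eq.mp hkm with hlt | rfl
      · exact Or.inl ⟨k, hk, hlt, h2⟩
      · exact Or.inr h2

variable {v} {Q}

/-- a common vertex of two distinct gadget paths is an endpoint of both. -/
lemma mem_both (hv : Function.Injective v)
    (hlen : ∀ i j, 1 ≤ (Q i j).length)
    (hterm : ∀ (i : Fin n) (j : ZMod 3) (p : Fin (n + 1) × ZMod 3), v p ∉ (Q i j).interior)
    (hdisj : ∀ (i : Fin n) (j : ZMod 3) (i' : Fin n) (j' : ZMod 3), (i, j) ≠ (i', j') →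
      ∀ x : V, x ∈ (Q i j).interior → x ∉ (Q i' j').interior)
    {a a' : Fin n} {b b' : ZMod 3} (hne : (a, b) ≠ (a', b')) {x : V}
    (hx : x ∈ (Q a b).support) (hx' : x ∈ (Q a' b').support) :
    (x = v (a.castSucc, b) ∨ x = v (a.succ, b + z a)) ∧
      (x = v (a'.castSucc, b') ∨ x = v (a'.succ, b' + z a')) := by
  rw [(Q a b).mem_support_trichotomy (hlen a b)] at hx
  rw [(Q a' b').mem_support_trichotomy (hlen a' b')] at hx'
  rcases hx with h1 | h1 | h1
  · rcases hx' with h2 | h2 | h2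
    · exact ⟨Or.inl h1, Or.inl h2⟩
    · exact absurd (h1 ▸ h2) (hterm a' b' _)
    · exact ⟨Or.inl h1, Or.inr h2⟩
  · rcases hx' with h2 | h2 | h2
    · exact absurd (h2 ▸ h1) (hterm a b _)
    · exact absurd h2 (hdisj a b a' b' hne x h1)
    · exact absurd (h2 ▸ h1) (hterm a b _)
  · rcases hx' with h2 | h2 | h2
    · exact ⟨Or.inr h1, Or.inl h2⟩
    · exact absurd (h1 ▸ h2) (hterm a' b' _)
    · exact ⟨Or.inr h1, Or.inr h2⟩

lemma gW_isPath (hv : Function.Injective v)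
    (hpath : ∀ i j, (Q i j).IsPath)
    (hlen : ∀ i j, 1 ≤ (Q i j).length)
    (hterm : ∀ (i : Fin n) (j : ZMod 3) (p : Fin (n + 1) × ZMod 3), v p ∉ (Q i j).interior)
    (hdisj : ∀ (i : Fin n) (j : ZMod 3) (i' : Fin n) (j' : ZMod 3), (i, j) ≠ (i', j') →
      ∀ x : V, x ∈ (Q i j).interior → x ∉ (Q i' j').interior)
    (j : ZMod 3) (m : ℕ) (h : m ≤ n) : (gW v Q j m h).IsPath := by
  induction m with
  | zero => rw [gW_zero, SimpleGraph.Walk.isPath_copy]; simp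
  | succ m ih =>
    rw [gW_succ]
    refine SimpleGraph.Walk.isPath_append' (ih (Nat.le_of_succ_le h)) (by simp [hpath]) ?_
    intro y hy hy'
    rw [SimpleGraph.Walk.support_copy] at hy'
    have htri := ((Q ⟨m, h⟩ (j + gs z m)).mem_support_trichotomy (hlen _ _)).mp hy'
    rw [gW_support] at hy
    have hne : ∀ (k : ℕ) (hk : k < n), k < m →
        ((⟨k, hk⟩ : Fin n), j + gs z k) ≠ ((⟨m, h⟩ : Fin n), j + gs z m) := by
      intro k hk hkm hcon
      rw [Prod.mk.injEq, Fin.mk.injEq] at hcon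
      omega
    rcases htri with h2 | h2 | h2
    · -- y is the start of Q_m, which is the gluing vertex
      rw [h2, Fin.castSucc_mk]
    · -- y is interior of Q_m
      exfalso
      rcases hy with h1 | ⟨k, hk, hkm, h1⟩
      · exact absurd h2 (h1 ▸ hterm ⟨m, h⟩ _ (0, j))
      · have hb := (mem_both hv hlen hterm hdisj (hne k hk hkm) h1 hy').1
        rcases hb with h4 | h4 <;> exact absurd h2 (h4 ▸ hterm _ _ _)
    · -- y is the end of Q_m: impossible
      exfalso
      rcases hy with h1 | ⟨k, hk, hkm, h1⟩
      · have h5 := hv (h1.symm.trans h2)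
        rw [Prod.mk.injEq] at h5
        have h6 := congrArg Fin.val h5.1
        simp only [Fin.val_zero, Fin.val_succ] at h6
        omega
      · have hb := (mem_both hv hlen hterm hdisj (hne k hk hkm) h1 hy').1
        rcases hb with h4 | h4 <;>
        · have h5 := hv (h4.symm.trans h2)
          rw [Prod.mk.injEq] at h5
          have h6 := congrArg Fin.val h5.1
          simp only [Fin.coe_castSucc, Fin.val_succ] at h6
          omega

end Gadget

theorem gadget_paths_concatenate
    {n : ℕ} (hn : 2 ≤ n) {V : Type*} [Fintype V] (G : SimpleGraph V)
    (v : Fin (n + 1) × ZMod 3 → V) (hv : Function.Injective v)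
    (z : Fin n → ZMod 3)
    (Q : ∀ (i : Fin n) (j : ZMod 3), G.Walk (v (i.castSucc, j)) (v (i.succ, j + z i)))
    -- each `Q i j` is a path of length at least 1
    (hpath : ∀ i j, (Q i j).IsPath)
    (hlen : ∀ i j, 1 ≤ (Q i j).length)
    -- no terminal is an internal vertex of any path
    (hterm : ∀ (i : Fin n) (j : ZMod 3) (p : Fin (n + 1) × ZMod 3), v p ∉ (Q i j).interior)
    -- distinct paths share no internal vertices
    (hdisj : ∀ (i : Fin n) (j : ZMod 3) (i' : Fin n) (j' : ZMod 3), (i, j) ≠ (i', j') →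
      ∀ x : V, x ∈ (Q i j).interior → x ∉ (Q i' j').interior)
    -- every vertex lies on some path
    (hvert : ∀ x : V, ∃ i j, x ∈ (Q i j).support)
    -- every edge lies on some path
    (hedge : ∀ e ∈ G.edgeSet, ∃ i j, e ∈ (Q i j).edges) :
    ∃ P : ∀ j : ZMod 3, G.Walk (v (0, j)) (v (Fin.last n, j + ∑ i, z i)),
      (∀ j, (P j).IsPath) ∧
      (∀ j j' : ZMod 3, j ≠ j' → ∀ x : V, x ∈ (P j).support → x ∉ (P j').support) ∧
      (∀ x : V, ∃ j, x ∈ (P j).support) ∧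
      (∀ e ∈ G.edgeSet, ∃ j, e ∈ (P j).edges) := by
  refine ⟨fun j => (gW v Q j n le_rfl).copy rfl (congrArg v (by rw [gs_total]; rfl)),
    ?_, ?_, ?_, ?_⟩
  · intro j
    rw [SimpleGraph.Walk.isPath_copy]
    exact gW_isPath hv hpath hlen hterm hdisj j n le_rfl
  · intro j j' hjj' x hx hx'
    rw [SimpleGraph.Walk.support_copy, gW_support] at hx hx'
    apply hjj'
    rcases hx with h1 | ⟨k, hk, hkm, h1⟩
    · rcases hx' with h2 | ⟨k', hk', hkm', h2⟩
      · have hp := hv (h1.symm.trans h2)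
        rw [Prod.mk.injEq] at hp
        exact hp.2
      · rw [(Q _ _).mem_support_trichotomy (hlen _ _)] at h2
        rcases h2 with h2 | h2 | h2
        · have hp := hv (h1.symm.trans h2)
          rw [Prod.mk.injEq] at hp
          have h6 := congrArg Fin.val hp.1
          simp only [Fin.val_zero, Fin.coe_castSucc] at h6
          obtain rfl : k' = 0 := h6.symm
          have hps := hp.2
          rwa [gs_zero, add_zero] at hps
        · exact absurd h2 (h1 ▸ hterm _ _ (0, j))
        · have hp := hv (h1.symm.trans h2)
          rw [Prod.mk.injEq] at hp
          have h6 := congrArg Fin.val hp.1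
          simp only [Fin.val_zero, Fin.val_succ] at h6
          omega
    · rcases hx' with h2 | ⟨k', hk', hkm', h2⟩
      · rw [(Q _ _).mem_support_trichotomy (hlen _ _)] at h1
        rcases h1 with h1 | h1 | h1
        · have hp := hv (h2.symm.trans h1)
          rw [Prod.mk.injEq] at hp
          have h6 := congrArg Fin.val hp.1
          simp only [Fin.val_zero, Fin.coe_castSucc] at h6
          obtain rfl : k = 0 := h6.symm
          have hps := hp.2
          rw [gs_zero, add_zero] at hps
          exact hps.symm
        · exact absurd h1 (h2 ▸ hterm _ _ (0, j'))
        · have hp := hv (h2.symm.trans h1)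
          rw [Prod.mk.injEq] at hp
          have h6 := congrArg Fin.val hp.1
          simp only [Fin.val_zero, Fin.val_succ] at h6
          omega
      · have hne : ((⟨k, hk⟩ : Fin n), j + gs z k) ≠ ((⟨k', hk'⟩ : Fin n), j' + gs z k') := by
          intro hcon
          rw [Prod.mk.injEq, Fin.mk.injEq] at hcon
          obtain ⟨rfl, h3⟩ := hcon
          exact hjj' (add_right_cancel h3)
        obtain ⟨hb, hb'⟩ := mem_both hv hlen hterm hdisj hne h1 h2
        rcases hb with h4 | h4 <;> rcases hb' with h5 | h5
        · have hp := hv (h4.symm.trans h5)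
          rw [Prod.mk.injEq] at hp
          have h6 := congrArg Fin.val hp.1
          simp only [Fin.coe_castSucc, Fin.val_succ] at h6
          have hps := hp.2
          obtain rfl : k = k' := h6
          exact add_right_cancel hps
        · have hp := hv (h4.symm.trans h5)
          rw [Prod.mk.injEq] at hp
          have h6 := congrArg Fin.val hp.1
          simp only [Fin.coe_castSucc, Fin.val_succ] at h6
          have hps := hp.2
          obtain rfl : k = k' + 1 := h6
          rw [gs_succ hk', ← add_assoc] at hps
          exact add_right_cancel (add_right_cancel hps)
        · have hp := hv (h4.symm.trans h5)
          rw [Prod.mk.injEq] at hp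
          have h6 := congrArg Fin.val hp.1
          simp only [Fin.coe_castSucc, Fin.val_succ] at h6
          have hps := hp.2
          obtain rfl : k' = k + 1 := h6.symm
          rw [gs_succ hk, ← add_assoc] at hps
          exact add_right_cancel (add_right_cancel hps)
        · have hp := hv (h4.symm.trans h5)
          rw [Prod.mk.injEq] at hp
          have h6 := congrArg Fin.val hp.1
          simp only [Fin.coe_castSucc, Fin.val_succ] at h6
          have hps := hp.2
          obtain rfl : k = k' := by omega
          exact add_right_cancel (add_right_cancel hps)
  · intro x
    obtain ⟨i, j0, hx⟩ := hvert x
    refine ⟨j0 - gs z i.1, ?_⟩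
    rw [SimpleGraph.Walk.support_copy, gW_support]
    refine Or.inr ⟨i.1, i.isLt, i.isLt, ?_⟩
    rw [sub_add_cancel, Fin.eta]
    exact hx
  · intro e he
    obtain ⟨i, j0, hx⟩ := hedge e he
    refine ⟨j0 - gs z i.1, ?_⟩
    rw [SimpleGraph.Walk.edges_copy, gW_edges]
    refine ⟨i.1, i.isLt, i.isLt, ?_⟩
    rw [sub_add_cancel, Fin.eta]
    exact hx
end

section
/- Let n ≥ 2, let V be a finite type, G a simple graph on V, v : Fin n × ZMod 3 → V an injective map, and z : Fin n → ZMod 3, where the column index is read cyclically (column n means column 0). Suppose that for every i ∈ Fin n and j ∈ ZMod 3 there is a path Q_{i,j} in G from v(i, j) to v(i+1 mod n, j + z(i)) containing at least one internal vertex, such that: no vertex v(i', j') occurs as an internal vertex of any Q_{i,j}; any two distinct paths Q_{i,j} and Q_{i',j'} have no common internal vertices; every vertex of V lies on some Q_{i,j}; and every edge of G lies on some Q_{i,j}. Then G has a Hamiltonian cycle if and only if Σ_{i ∈ Fin n} z(i) ≠ 0 in ZMod 3; moreover, when Σ_{i ∈ Fin n} z(i) = 0, G is a vertex-disjoint union of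 exactly three cycles. -/
set_option linter.unusedSectionVars false
namespace CGaux
open SimpleGraph Walk List
open Fin.CommRing

variable {V : Type*} {G : SimpleGraph V}

lemma tail_ne_nil {u w : V} (p : G.Walk u w) (hl : 1 ≤ p.length) :
    p.support.tail ≠ [] := by
  have := p.length_support
  intro h
  have : p.support.length = 1 := by
    rw [p.support_eq_cons, h]; rfl
  omega

lemma tail_support_eq {u w : V} (p : G.Walk u w) (hl : 1 ≤ p.length) :
    p.support.tail = p.interior ++ [w] := by
  have hne := tail_ne_nil p hl
  have hg : p.support.tail.getLast hne = w := by
    cases p with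
    | nil => simp at hl
    | cons h q => exact q.getLast_support
  conv_lhs => rw [← List.dropLast_append_getLast hne]
  rw [hg]; rfl

lemma mem_tail_support_iff {u w : V} (p : G.Walk u w) (hl : 1 ≤ p.length) {x : V} :
    x ∈ p.support.tail ↔ x ∈ p.interior ∨ x = w := by
  rw [tail_support_eq p hl]; simp

lemma mem_support_iff' {u w : V} (p : G.Walk u w) (hl : 1 ≤ p.length) {x : V} :
    x ∈ p.support ↔ x = u ∨ x ∈ p.interior ∨ x = w := by
  rw [p.support_eq_cons, List.mem_cons, mem_tail_support_iff p hl]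

lemma no_head_last_edge {u w : V} (p : G.Walk u w) (hp : p.IsPath) (hl : 2 ≤ p.length) :
    s(u, w) ∉ p.edges := by
  cases p with
  | nil => simp
  | cons h q =>
    rename_i b
    rw [Walk.edges_cons, List.mem_cons]
    rintro (he | he)
    · have : b = w := by
        rcases Sym2.eq_iff.mp he with ⟨-, hb⟩ | ⟨h1, -⟩
        · exact hb.symm
        · exact absurd h1 h.ne
      subst this
      have : q = Walk.nil := (Walk.isPath_iff_eq_nil (p := q)).mp ((Walk.cons_isPath_iff h q).mp hp).1
      rw [this] at hl
      simp [Walk.length_cons] at hl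
    · exact ((Walk.cons_isPath_iff h q).mp hp).2 (q.fst_mem_support_of_mem_edges he)

section Gadget

variable {n : ℕ} [NeZero n] {V : Type*} {G : SimpleGraph V}
  {v : Fin n × ZMod 3 → V} {z : Fin n → ZMod 3}

/-- partial sums of `z` along the cyclic order, starting at column 0. -/
def S (z : Fin n → ZMod 3) (m : ℕ) : ZMod 3 := ∑ k ∈ Finset.range m, z (k : Fin n)

@[simp] lemma S_zero : S z 0 = 0 := by simp [S]

lemma S_succ (m : ℕ) : S z (m + 1) = S z m + z (m : Fin n) := Finset.sum_range_succ _ _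

lemma S_n : S z n = ∑ i, z i := by
  rw [S, ← Fin.sum_univ_eq_sum_range (fun k => z (k : Fin n)) n]
  exact Finset.sum_congr rfl fun i _ => by rw [Fin.cast_val_eq_self]

lemma S_add_n (k : ℕ) : S z (k + n) = S z k + ∑ i, z i := by
  induction k with
  | zero => simpa using S_n
  | succ k ih =>
    have h1 : (↑(k + n) : Fin n) = (k : Fin n) := by
      push_cast [Fin.natCast_self]; ring
    have : k + 1 + n = (k + n) + 1 := by ring
    rw [this, S_succ, h1, ih, S_succ]; ring

/-- The walk obtained by concatenating `m` of the gadget paths, starting at `v (0, j)`. -/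
def Wlk (v : Fin n × ZMod 3 → V) (z : Fin n → ZMod 3)
    (Q : ∀ (i : Fin n) (j : ZMod 3), G.Walk (v (i, j)) (v (i + 1, j + z i)))
    (j : ZMod 3) : (m : ℕ) → G.Walk (v (0, j)) (v ((m : Fin n), j + S z m))
  | 0 => Walk.nil.copy rfl (by norm_num)
  | (m+1) => ((Wlk v z Q j m).append (Q (m : Fin n) (j + S z m))).copy rfl
      (congrArg v (by rw [S_succ]; push_cast; rw [Prod.mk.injEq]; exact ⟨rfl, (add_assoc _ _ _)⟩))

variable (Q : ∀ (i : Fin n) (j : ZMod 3), G.Walk (v (i, j)) (v (i + 1, j + z i)))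

lemma Wlk_tail_support (j : ZMod 3) (m : ℕ) :
    (Wlk v z Q j m).support.tail
      = (List.range m).flatMap (fun (k : ℕ) => (Q (k : Fin n) (j + S z k)).support.tail) := by
  induction m with
  | zero => simp [Wlk]
  | succ m ih =>
    rw [Wlk, SimpleGraph.Walk.support_copy, SimpleGraph.Walk.support_append,
      List.range_succ, List.flatMap_append]
    rw [List.tail_append_of_ne_nil ((Wlk v z Q j m).support_ne_nil)]
    rw [ih]; simp

lemma Wlk_edges (j : ZMod 3) (m : ℕ) :
    (Wlk v z Q j m).edges
      = (List.range m).flatMap (fun (k : ℕ) => (Q (k : Fin n) (j + S z k)).edges) := by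
  induction m with
  | zero => simp [Wlk]
  | succ m ih =>
    rw [Wlk, SimpleGraph.Walk.edges_copy, SimpleGraph.Walk.edges_append,
      List.range_succ, List.flatMap_append, ih]; simp

lemma Wlk_support (j : ZMod 3) (m : ℕ) :
    (Wlk v z Q j m).support
      = v (0, j) :: (List.range m).flatMap (fun (k : ℕ) => (Q (k : Fin n) (j + S z k)).support.tail) := by
  rw [← Wlk_tail_support]; exact SimpleGraph.Walk.support_eq_cons _

lemma mem_Wlk_succ {j : ZMod 3} {m : ℕ} {x : V} :
    x ∈ (Wlk v z Q j (m+1)).support ↔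
      x ∈ (Wlk v z Q j m).support ∨ x ∈ (Q (m : Fin n) (j + S z m)).support := by
  rw [Wlk, SimpleGraph.Walk.support_copy, SimpleGraph.Walk.mem_support_append_iff]

lemma Qsub_support {j : ZMod 3} {m k : ℕ} (hk : k < m) :
    ∀ x ∈ (Q (k : Fin n) (j + S z k)).support, x ∈ (Wlk v z Q j m).support := by
  induction m with
  | zero => omega
  | succ m ih =>
    intro x hx
    rw [mem_Wlk_succ]
    rcases Nat.lt_succ_iff_lt_or_eq.mp hk with h | rfl
    · exact Or.inl (ih h x hx)
    · exact Or.inr hx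

lemma Qsub_edges {j : ZMod 3} {m k : ℕ} (hk : k < m) :
    ∀ e ∈ (Q (k : Fin n) (j + S z k)).edges, e ∈ (Wlk v z Q j m).edges := by
  intro e he
  rw [Wlk_edges]
  exact List.mem_flatMap.mpr ⟨k, List.mem_range.mpr hk, he⟩

lemma Wlk_length_ge (hlen : ∀ i j, 2 ≤ (Q i j).length) (j : ZMod 3) (m : ℕ) :
    2 * m ≤ (Wlk v z Q j m).length := by
  induction m with
  | zero => omega
  | succ m ih =>
    rw [Wlk, SimpleGraph.Walk.length_copy, SimpleGraph.Walk.length_append]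
    have := hlen (m : Fin n) (j + S z m)
    omega

lemma cast_dvd_sub {a b : ℕ} (hab : a ≤ b) (h : (a : Fin n) = (b : Fin n)) :
    n ∣ (b - a) := by
  have h0 : ((b - a : ℕ) : Fin n) = 0 := by
    rw [Nat.cast_sub hab, ← h, sub_self]
  exact (CharP.cast_eq_zero_iff (Fin n) n _).mp h0

variable (hv : Function.Injective v)
  (hpath : ∀ i j, (Q i j).IsPath)
  (hlen : ∀ i j, 2 ≤ (Q i j).length)
  (hterm : ∀ (i : Fin n) (j : ZMod 3) (p : Fin n × ZMod 3), v p ∉ (Q i j).interior)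
  (hdisj : ∀ (i : Fin n) (j : ZMod 3) (i' : Fin n) (j' : ZMod 3), (i, j) ≠ (i', j') →
      ∀ x : V, x ∈ (Q i j).interior → x ∉ (Q i' j').interior)

section
include hv hlen hterm hdisj

lemma tails_disjoint {i j i' j'} (hne : (i, j) ≠ (i', j')) :
    List.Disjoint (Q i j).support.tail (Q i' j').support.tail := by
  intro x hx hx'
  rw [mem_tail_support_iff _ (by have := hlen i j; omega)] at hx
  rw [mem_tail_support_iff _ (by have := hlen i' j'; omega)] at hx'
  rcases hx with hx | rfl
  · rcases hx' with hx' | rfl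
    · exact hdisj i j i' j' hne x hx hx'
    · exact hterm i j _ hx
  · rcases hx' with hx' | hlast
    · exact hterm i' j' _ hx'
    · obtain ⟨h1, h2⟩ := Prod.ext_iff.mp (hv hlast)
      have hi : i = i' := add_right_cancel h1
      subst hi
      exact hne (Prod.ext rfl (add_right_cancel h2))

lemma support_overlap {i j i' j'} {x : V}
    (hx : x ∈ (Q i j).support) (hx' : x ∈ (Q i' j').support) :
    (i, j) = (i', j') ∨ (i, j) = (i' + 1, j' + z i') ∨ (i + 1, j + z i) = (i', j') := by
  rw [mem_support_iff' _ (by have := hlen i j; omega)] at hx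
  rw [mem_support_iff' _ (by have := hlen i' j'; omega)] at hx'
  rcases hx with h1 | h1 | h1 <;> rcases hx' with h2 | h2 | h2
  · exact Or.inl (hv (h1.symm.trans h2))
  · rw [h1] at h2; exact absurd h2 (hterm i' j' _)
  · exact Or.inr (Or.inl (hv (h1.symm.trans h2)))
  · rw [h2] at h1; exact absurd h1 (hterm i j _)
  · by_cases h : (i, j) = (i', j')
    · exact Or.inl h
    · exact absurd h2 (hdisj i j i' j' h x h1)
  · rw [h2] at h1; exact absurd h1 (hterm i j _)
  · exact Or.inr (Or.inr (hv (h1.symm.trans h2)))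
  · rw [h1] at h2; exact absurd h2 (hterm i' j' _)
  · obtain ⟨g1, g2⟩ := Prod.ext_iff.mp (hv (h1.symm.trans h2))
    have hi : i = i' := add_right_cancel g1
    subst hi
    exact Or.inl (Prod.ext rfl (add_right_cancel g2))

include hpath in
lemma edges_disjoint {i j i' j'} (hne : (i, j) ≠ (i', j')) :
    List.Disjoint (Q i j).edges (Q i' j').edges := by
  intro e he he'
  induction e using Sym2.ind with
  | _ a b =>
    have hadj : G.Adj a b := (Q i j).adj_of_mem_edges he
    -- one of a, b is an interior vertex of Q i j
    have hint : a ∈ (Q i j).interior ∨ b ∈ (Q i j).interior := by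
      by_contra hcon
      push_neg at hcon
      have ha := (Q i j).fst_mem_support_of_mem_edges he
      have hb := (Q i j).snd_mem_support_of_mem_edges he
      rw [mem_support_iff' _ (by have := hlen i j; omega)] at ha hb
      have hne' : s(v (i, j), v (i + 1, j + z i)) ∉ (Q i j).edges :=
        no_head_last_edge _ (hpath i j) (hlen i j)
      rcases ha with rfl | ha | rfl <;> rcases hb with rfl | hb | rfl
      · exact hadj.ne rfl
      · exact hcon.2 hb
      · exact hne' he
      · exact hcon.1 ha
      · exact hcon.1 ha
      · exact hcon.1 ha
      · exact hne' (by rwa [Sym2.eq_swap])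
      · exact hcon.2 hb
      · exact hadj.ne rfl
    -- that vertex lies on Q i' j', contradiction
    obtain hx | hx := hint
    · have hs : a ∈ (Q i' j').support := (Q i' j').fst_mem_support_of_mem_edges he'
      rw [mem_support_iff' _ (by have := hlen i' j'; omega)] at hs
      rcases hs with rfl | hs | rfl
      · exact hterm i j _ hx
      · exact hdisj i j i' j' hne a hx hs
      · exact hterm i j _ hx
    · have hs : b ∈ (Q i' j').support := (Q i' j').snd_mem_support_of_mem_edges he'
      rw [mem_support_iff' _ (by have := hlen i' j'; omega)] at hs
      rcases hs with rfl | hs | rfl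
      · exact hterm i j _ hx
      · exact hdisj i j i' j' hne b hx hs
      · exact hterm i j _ hx

end

end Gadget
end CGaux
open SimpleGraph CGaux
open Fin.CommRing

theorem cyclic_gadget_hamiltonian_iff
    {n : ℕ} [NeZero n] (hn : 2 ≤ n) {V : Type*} [Fintype V] [DecidableEq V]
    (G : SimpleGraph V)
    (v : Fin n × ZMod 3 → V) (hv : Function.Injective v)
    (z : Fin n → ZMod 3)
    -- the column index is read cyclically: `i + 1` is addition in `Fin n`
    (Q : ∀ (i : Fin n) (j : ZMod 3), G.Walk (v (i, j)) (v (i + 1, j + z i)))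
    -- each `Q i j` is a path containing at least one internal vertex
    (hpath : ∀ i j, (Q i j).IsPath)
    (hlen : ∀ i j, 2 ≤ (Q i j).length)
    -- no `v (i', j')` is an internal vertex of any path
    (hterm : ∀ (i : Fin n) (j : ZMod 3) (p : Fin n × ZMod 3), v p ∉ (Q i j).interior)
    -- distinct paths share no internal vertices
    (hdisj : ∀ (i : Fin n) (j : ZMod 3) (i' : Fin n) (j' : ZMod 3), (i, j) ≠ (i', j') →
      ∀ x : V, x ∈ (Q i j).interior → x ∉ (Q i' j').interior)
    -- every vertex lies on some path
    (hvert : ∀ x : V, ∃ i j, x ∈ (Q i j).support)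
    -- every edge lies on some path
    (hedge : ∀ e ∈ G.edgeSet, ∃ i j, e ∈ (Q i j).edges) :
    ((∃ (a : V) (c : G.Walk a a), c.IsHamiltonianCycle) ↔ (∑ i, z i) ≠ 0) ∧
    ((∑ i, z i) = 0 →
      ∃ (a : ZMod 3 → V) (C : ∀ j : ZMod 3, G.Walk (a j) (a j)),
        (∀ j, (C j).IsCycle) ∧
        (∀ j j' : ZMod 3, j ≠ j' → ∀ x : V, x ∈ (C j).support → x ∉ (C j').support) ∧
        (∀ x : V, ∃ j, x ∈ (C j).support) ∧
        (∀ e ∈ G.edgeSet, ∃ j, e ∈ (C j).edges)) := by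
  classical
  have hn0 : 0 < n := by omega
  have key3 : ∀ s : ZMod 3, s ≠ 0 → s + s ≠ 0 := by decide
  have key33 : ∀ j s : ZMod 3, j + (s + s + s) = j := by decide
  have hcases : ∀ s c : ZMod 3, s ≠ 0 → c = 0 ∨ c = s ∨ c = s + s := by decide
  have hQtail : ∀ i j, (Q i j).support.tail.Nodup := fun i j => ((hpath i j).support_nodup).tail
  -- nodup facts for the concatenated walks, given distinctness of the pairs used
  have hmkC : ∀ (j : ZMod 3) (m : ℕ), 1 ≤ m →
      (∀ k k', k < m → k' < m → k ≠ k' →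
        ((k : Fin n), j + S z k) ≠ ((k' : Fin n), j + S z k')) →
      (Wlk v z Q j m).edges.Nodup ∧ (Wlk v z Q j m).support.tail.Nodup ∧
        (Wlk v z Q j m).edges ≠ [] := by
    intro j m hm hp
    refine ⟨?_, ?_, ?_⟩
    · rw [CGaux.Wlk_edges, List.nodup_flatMap]
      refine ⟨fun k _ => (hpath _ _).isTrail.edges_nodup, ?_⟩
      refine (List.pairwise_lt_range (n := m)).imp_of_mem ?_
      intro a b ha hb hab
      rw [List.mem_range] at ha hb
      exact CGaux.edges_disjoint Q hv hpath hlen hterm hdisj (hp a b ha hb (Nat.ne_of_lt hab))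
    · rw [CGaux.Wlk_tail_support, List.nodup_flatMap]
      refine ⟨fun k _ => hQtail _ _, ?_⟩
      refine (List.pairwise_lt_range (n := m)).imp_of_mem ?_
      intro a b ha hb hab
      rw [List.mem_range] at ha hb
      exact CGaux.tails_disjoint Q hv hlen hterm hdisj (hp a b ha hb (Nat.ne_of_lt hab))
    · have h0 : 0 < (Q ((0:ℕ) : Fin n) (j + S z 0)).edges.length := by
        rw [SimpleGraph.Walk.length_edges]
        have := hlen ((0:ℕ) : Fin n) (j + S z 0); omega
      obtain ⟨e, he⟩ := List.exists_mem_of_length_pos h0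
      exact List.ne_nil_of_mem (CGaux.Qsub_edges Q (by omega : 0 < m) e he)
  -- transporting membership along an identification of pairs
  have hPk : ∀ (j : ZMod 3) (m : ℕ) (i : Fin n) (j0 : ZMod 3) (k : ℕ), k < m →
      ((k : Fin n), j + S z k) = (i, j0) →
      ∀ x ∈ (Q i j0).support, x ∈ (Wlk v z Q j m).support := by
    intro j m i j0 k hk heq x hx
    have e1 : ((k : ℕ) : Fin n) = i := congrArg Prod.fst heq
    have e2 : j + S z k = j0 := congrArg Prod.snd heq
    exact CGaux.Qsub_support Q hk x (by rw [e1, e2]; exact hx)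
  have hPkE : ∀ (j : ZMod 3) (m : ℕ) (i : Fin n) (j0 : ZMod 3) (k : ℕ), k < m →
      ((k : Fin n), j + S z k) = (i, j0) →
      ∀ e ∈ (Q i j0).edges, e ∈ (Wlk v z Q j m).edges := by
    intro j m i j0 k hk heq e he
    have e1 : ((k : ℕ) : Fin n) = i := congrArg Prod.fst heq
    have e2 : j + S z k = j0 := congrArg Prod.snd heq
    exact CGaux.Qsub_edges Q hk e (by rw [e1, e2]; exact he)
  -- distinctness of pairs, in the two regimes
  have hpair3 : (∑ i, z i) ≠ 0 → ∀ (j : ZMod 3) k k', k < 3*n → k' < 3*n → k ≠ k' →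
      ((k : Fin n), j + S z k) ≠ ((k' : Fin n), j + S z k') := by
    intro hsz j k k' hk hk' hne heq
    wlog hlt : k < k' generalizing k k'
    · exact this k' k hk' hk hne.symm heq.symm (by omega)
    have e1 : ((k : ℕ) : Fin n) = ((k' : ℕ) : Fin n) := congrArg Prod.fst heq
    have e2 : j + S z k = j + S z k' := congrArg Prod.snd heq
    obtain ⟨t, ht⟩ := CGaux.cast_dvd_sub (by omega) e1
    have htpos : 0 < t := by
      rcases Nat.eq_zero_or_pos t with rfl | h
      · omega
      · exact h
    have htle : t ≤ 2 := by
      by_contra hc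
      push_neg at hc
      have h2 : n * 3 ≤ n * t := Nat.mul_le_mul_left n hc
      rw [← ht] at h2
      omega
    rcases (by omega : t = 1 ∨ t = 2) with rfl | rfl
    · have hke : k' = k + n := by omega
      rw [hke, CGaux.S_add_n] at e2
      exact hsz (by linear_combination -e2)
    · have hke : k' = (k + n) + n := by omega
      rw [hke, CGaux.S_add_n, CGaux.S_add_n] at e2
      exact key3 _ hsz (by linear_combination -e2)
  have hpairN : ∀ (j : ZMod 3) k k', k < n → k' < n → k ≠ k' →
      ((k : Fin n), j + S z k) ≠ ((k' : Fin n), j + S z k') := by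
    intro j k k' hk hk' hne heq
    have e0 : ((k : ℕ) : Fin n) = ((k' : ℕ) : Fin n) := congrArg Prod.fst heq
    have e1 : ((k : Fin n) : ℕ) = ((k' : Fin n) : ℕ) := congrArg Fin.val e0
    rw [Fin.val_cast_of_lt hk, Fin.val_cast_of_lt hk'] at e1
    exact hne e1
  -- Part A : nonzero sum gives a Hamiltonian cycle
  have partA : (∑ i, z i) ≠ 0 → ∃ (a : V) (c : G.Walk a a), c.IsHamiltonianCycle := by
    intro hsz
    have hclose : v ((↑(3*n) : Fin n), (0:ZMod 3) + S z (3*n)) = v (0, 0) := by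
      apply congrArg v
      apply Prod.ext
      · push_cast [Fin.natCast_self]; ring
      · rw [(by ring : 3*n = (n + n) + n), CGaux.S_add_n, CGaux.S_add_n, CGaux.S_n]
        exact key33 0 _
    refine ⟨v (0, 0), (Wlk v z Q 0 (3*n)).copy rfl hclose, ?_⟩
    set C := (Wlk v z Q 0 (3*n)).copy rfl hclose with hC
    rw [SimpleGraph.Walk.isHamiltonianCycle_iff_isCycle_and_support_count_tail_eq_one]
    obtain ⟨hE, hT, hNE⟩ := hmkC 0 (3*n) (by omega) (hpair3 hsz 0)
    have hCsupp : C.support = (Wlk v z Q 0 (3*n)).support :=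
      SimpleGraph.Walk.support_copy _ _ _
    have hCedges : C.edges = (Wlk v z Q 0 (3*n)).edges :=
      SimpleGraph.Walk.edges_copy _ _ _
    have hClen : 1 ≤ C.length := by
      have h1 : C.length = (Wlk v z Q 0 (3*n)).length := SimpleGraph.Walk.length_copy _ _ _
      have h2 := CGaux.Wlk_length_ge Q hlen 0 (3*n)
      omega
    constructor
    · exact ⟨⟨⟨by rw [hCedges]; exact hE⟩,
        fun h => hNE (by rw [← hCedges, h, SimpleGraph.Walk.edges_nil])⟩,
        by rw [hCsupp] at *; exact hT⟩
    · intro x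
      apply List.count_eq_one_of_mem (by rw [hCsupp]; exact hT)
      have hxsup : x ∈ C.support := by
        rw [hCsupp]
        obtain ⟨i, j0, hx⟩ := hvert x
        rcases hcases (∑ i, z i) (j0 - S z i.val) hsz with hc | hc | hc
        · refine hPk 0 (3*n) i j0 i.val (by have := i.isLt; omega) ?_ x hx
          refine Prod.ext (Fin.cast_val_eq_self i) ?_
          rw [zero_add]
          linear_combination -hc
        · refine hPk 0 (3*n) i j0 (i.val + n) (by have := i.isLt; omega) ?_ x hx
          refine Prod.ext ?_ ?_
          · push_cast [Fin.natCast_self]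
            simp [Fin.cast_val_eq_self]
          · rw [CGaux.S_add_n, zero_add]
            linear_combination -hc
        · refine hPk 0 (3*n) i j0 ((i.val + n) + n) (by have := i.isLt; omega) ?_ x hx
          refine Prod.ext ?_ ?_
          · push_cast [Fin.natCast_self]
            simp [Fin.cast_val_eq_self]
          · rw [CGaux.S_add_n, CGaux.S_add_n, zero_add]
            linear_combination -hc
      rw [C.support_eq_cons, List.mem_cons] at hxsup
      rcases hxsup with rfl | h
      · exact (CGaux.mem_tail_support_iff C hClen).mpr (Or.inr rfl)
      · exact h
  -- Part B : zero sum gives the three disjoint cycles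
  have partB : (∑ i, z i) = 0 →
      ∃ (a : ZMod 3 → V) (C : ∀ j : ZMod 3, G.Walk (a j) (a j)),
        (∀ j, (C j).IsCycle) ∧
        (∀ j j' : ZMod 3, j ≠ j' → ∀ x : V, x ∈ (C j).support → x ∉ (C j').support) ∧
        (∀ x : V, ∃ j, x ∈ (C j).support) ∧
        (∀ e ∈ G.edgeSet, ∃ j, e ∈ (C j).edges) ∧
        (∀ j, v (0, j) ∈ (C j).support) := by
    intro hsz
    have hclose : ∀ j : ZMod 3, v ((↑n : Fin n), j + S z n) = v (0, j) := fun j =>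
      congrArg v (Prod.ext (Fin.natCast_self n) (by rw [CGaux.S_n, hsz, add_zero]))
    refine ⟨fun j => v (0, j), fun j => (Wlk v z Q j n).copy rfl (hclose j), ?_, ?_, ?_, ?_, ?_⟩
    · intro j
      show ((Wlk v z Q j n).copy rfl (hclose j)).IsCycle
      obtain ⟨hE, hT, hNE⟩ := hmkC j n (by omega) (hpairN j)
      exact ⟨⟨⟨by rw [SimpleGraph.Walk.edges_copy]; exact hE⟩,
        fun h => hNE (by
          rw [← SimpleGraph.Walk.edges_copy (Wlk v z Q j n) rfl (hclose j), h,
            SimpleGraph.Walk.edges_nil])⟩,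
        by rw [SimpleGraph.Walk.support_copy]; exact hT⟩
    · intro j j' hjj x hxj hxj'
      have hm : ∀ (jj : ZMod 3),
          x ∈ ((Wlk v z Q jj n).copy rfl (hclose jj)).support →
          ∃ k < n, x ∈ (Q (k : Fin n) (jj + S z k)).support := by
        intro jj hx
        rw [SimpleGraph.Walk.support_copy, CGaux.Wlk_support] at hx
        rcases List.mem_cons.mp hx with h | h
        · refine ⟨0, hn0, ?_⟩
          rw [h]
          have he : v ((0 : Fin n), jj) = v (((0:ℕ) : Fin n), jj + S z 0) :=
            congrArg v (Prod.ext (by norm_num) (by simp))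
          rw [he]
          exact SimpleGraph.Walk.start_mem_support _
        · obtain ⟨k, hk, hxk⟩ := List.mem_flatMap.mp h
          exact ⟨k, List.mem_range.mp hk, List.mem_of_mem_tail hxk⟩
      obtain ⟨k, hk, hxk⟩ := hm j hxj
      obtain ⟨k', hk', hxk'⟩ := hm j' hxj'
      have hjeq : ∀ (a b : ℕ) (ja jb : ZMod 3), a ≤ n → b ≤ n →
          ((a : Fin n), ja + S z a) = ((b : Fin n), jb + S z b) → ja = jb := by
        have main : ∀ (a b : ℕ) (ja jb : ZMod 3), a ≤ b → b ≤ n →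
            ((a : Fin n), ja + S z a) = ((b : Fin n), jb + S z b) → ja = jb := by
          intro a b ja jb hab hbn heq
          have e1 : ((a : ℕ) : Fin n) = ((b : ℕ) : Fin n) := congrArg Prod.fst heq
          have e2 : ja + S z a = jb + S z b := congrArg Prod.snd heq
          obtain ⟨t, ht⟩ := CGaux.cast_dvd_sub hab e1
          have htle : t ≤ 1 := by
            by_contra hc
            push_neg at hc
            have h2 : n * 2 ≤ n * t := Nat.mul_le_mul_left n hc
            rw [← ht] at h2
            omega
          rcases (by omega : t = 0 ∨ t = 1) with rfl | rfl
          · have hab' : a = b := by omega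
            subst hab'
            exact add_right_cancel e2
          · have hbe : b = a + n := by omega
            subst hbe
            rw [CGaux.S_add_n, hsz, add_zero] at e2
            exact add_right_cancel e2
        intro a b ja jb han hbn heq
        rcases le_total a b with h | h
        · exact main a b ja jb h hbn heq
        · exact (main b a jb ja h han heq.symm).symm
      have hov := CGaux.support_overlap Q hv hlen hterm hdisj hxk hxk'
      have hsucc : ∀ (kk : ℕ) (jj : ZMod 3),
          (((kk : Fin n) + 1 : Fin n), (jj + S z kk) + z (kk : Fin n))
            = (((kk+1 : ℕ) : Fin n), jj + S z (kk+1)) := by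
        intro kk jj
        refine Prod.ext (by push_cast; ring) (by rw [CGaux.S_succ]; ring)
      rcases hov with h | h | h
      · exact hjj (hjeq k k' j j' (by omega) (by omega) h)
      · exact hjj (hjeq k (k'+1) j j' (by omega) (by omega) (h.trans (hsucc k' j')))
      · exact hjj (hjeq (k+1) k' j j' (by omega) (by omega) ((hsucc k j).symm.trans h))
    · intro x
      obtain ⟨i, j0, hx⟩ := hvert x
      refine ⟨j0 - S z i.val, ?_⟩
      show x ∈ ((Wlk v z Q (j0 - S z i.val) n).copy rfl (hclose _)).support
      rw [SimpleGraph.Walk.support_copy]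
      exact hPk (j0 - S z i.val) n i j0 i.val i.isLt
        (Prod.ext (Fin.cast_val_eq_self i) (sub_add_cancel _ _)) x hx
    · intro e he
      obtain ⟨i, j0, heQ⟩ := hedge e he
      refine ⟨j0 - S z i.val, ?_⟩
      show e ∈ ((Wlk v z Q (j0 - S z i.val) n).copy rfl (hclose _)).edges
      rw [SimpleGraph.Walk.edges_copy]
      exact hPkE (j0 - S z i.val) n i j0 i.val i.isLt
        (Prod.ext (Fin.cast_val_eq_self i) (sub_add_cancel _ _)) e heQ
    · intro j
      exact SimpleGraph.Walk.start_mem_support ((Wlk v z Q j n).copy rfl (hclose j))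
  -- Part C : zero sum excludes a Hamiltonian cycle
  have hnoham : (∑ i, z i) = 0 → ¬ ∃ (a : V) (c : G.Walk a a), c.IsHamiltonianCycle := by
    intro hsz hham
    obtain ⟨a, c, hc⟩ := hham
    obtain ⟨aa, C, hcyc, hdisjC, hcov, hedgeC, hstart⟩ := partB hsz
    have hclosed : ∀ x y : V, G.Adj x y → ∀ jc, x ∈ (C jc).support → y ∈ (C jc).support := by
      intro x y hxy jc hx
      obtain ⟨j1, he1⟩ := hedgeC s(x,y) (G.mem_edgeSet.mpr hxy)
      have hx1 : x ∈ (C j1).support := SimpleGraph.Walk.fst_mem_support_of_mem_edges _ he1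
      have hy1 : y ∈ (C j1).support := SimpleGraph.Walk.snd_mem_support_of_mem_edges _ he1
      by_cases hj : jc = j1
      · rw [hj]; exact hy1
      · exact absurd hx1 (hdisjC jc j1 hj x hx)
    have hwalk : ∀ (x y : V) (w : G.Walk x y) (jc : ZMod 3),
        x ∈ (C jc).support → y ∈ (C jc).support := by
      intro x y w
      induction w with
      | nil => exact fun jc h => h
      | cons hadj w ih => exact fun jc h => ih jc (hclosed _ _ hadj jc h)
    rw [SimpleGraph.Walk.isHamiltonianCycle_iff_isCycle_and_support_count_tail_eq_one] at hc
    have hmemc : ∀ x : V, x ∈ c.support := fun x =>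
      List.mem_of_mem_tail (List.count_pos_iff.mp (by rw [hc.2 x]; omega))
    have w1 := c.takeUntil (v (0, 0)) (hmemc _)
    have w2 := c.takeUntil (v (0, 1)) (hmemc _)
    have hw : v (0, 1) ∈ (C 0).support :=
      hwalk _ _ (w1.reverse.append w2) 0 (hstart 0)
    exact hdisjC 1 0 (by decide) (v (0, 1)) (hstart 1) hw
  constructor
  · constructor
    · intro hham
      by_contra hsz
      exact hnoham hsz hham
    · exact partA
  · intro hsz
    obtain ⟨a, C, h1, h2, h3, h4, _⟩ := partB hsz
    exact ⟨a, C, h1, h2, h3, h4⟩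
end

section
/- Let U be a finite type with at least 3 elements and let m_C, m_D : U → U be fixed-point-free involutions (perfect matchings on U). Let G be the simple graph on U in which distinct u, u' are adjacent if and only if m_C(u) = u' or m_D(u) = u'. Let L ≥ 2 be an integer and let M be the simple graph on U × Fin L in which (u, a) and (u', a') are adjacent if and only if: u = u' and |a − a'| = 1; or a = a' = 0, u ≠ u' and m_C(u) = u'; or a = a' = L − 1, u ≠ u' and m_D(u) = u'. Then M has a Hamiltonian cycle if and only if G has a Hamiltonian cycle. -/
open SimpleGraph List

section part1
variable {V : Type*}

/-- Build a walk from a chain of adjacencies. -/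
def mkWalk {G : SimpleGraph V} : (a : V) → (l : List V) → (b : V) →
    List.Chain G.Adj a (l ++ [b]) → G.Walk a b
  | _, [], _, h => Walk.cons (List.chain_cons.mp h).1 Walk.nil
  | _, c :: l, b, h => Walk.cons (List.chain_cons.mp h).1 (mkWalk c l b (List.chain_cons.mp h).2)

@[simp] lemma support_mkWalk {G : SimpleGraph V} : ∀ (a : V) (l : List V) (b : V)
    (h : List.Chain G.Adj a (l ++ [b])), (mkWalk a l b h).support = a :: (l ++ [b])
  | _, [], _, _ => rfl
  | a, c :: l, b, h => by
      simp [mkWalk, support_mkWalk c l b (List.chain_cons.mp h).2]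

lemma length_mkWalk {G : SimpleGraph V} (a : V) (l : List V) (b : V)
    (h : List.Chain G.Adj a (l ++ [b])) : (mkWalk a l b h).length = l.length + 1 := by
  have h1 : (mkWalk a l b h).support.length = (mkWalk a l b h).length + 1 :=
    SimpleGraph.Walk.length_support _
  rw [support_mkWalk] at h1
  simp at h1
  omega

lemma closing_edge_not_mem {G : SimpleGraph V} {b a : V} (p : G.Walk b a)
    (hnd : p.support.Nodup) (hlen : 1 < p.length) : s(a, b) ∉ p.edges := by
  intro hmem
  cases p with
  | nil => simp at hlen
  | @cons _ c _ h q =>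
    rw [SimpleGraph.Walk.edges_cons, List.mem_cons] at hmem
    rw [SimpleGraph.Walk.support_cons, List.nodup_cons] at hnd
    rcases hmem with heq | hmem
    · rw [Sym2.eq_iff] at heq
      have hq : ¬ q.Nil := by
        intro hn
        rw [SimpleGraph.Walk.nil_iff_length_eq] at hn
        simp only [SimpleGraph.Walk.length_cons] at hlen
        omega
      rcases heq with ⟨rfl, rfl⟩ | ⟨rfl, _⟩
      · exact hnd.1 q.end_mem_support
      · have hpq : (⟨q, SimpleGraph.Walk.IsPath.mk' hnd.2⟩ : G.Path _ _) = SimpleGraph.Path.nil :=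
          SimpleGraph.Path.loop_eq _
        have : q = SimpleGraph.Walk.nil := congrArg Subtype.val hpq
        rw [this] at hq
        exact hq SimpleGraph.Walk.nil_nil
    · exact hnd.1 (q.snd_mem_support_of_mem_edges hmem)

lemma hamCycle_of_list [Fintype V] [DecidableEq V] {G : SimpleGraph V} (a : V) (l : List V)
    (hchain : List.Chain G.Adj a (l ++ [a])) (hnd : (a :: l).Nodup) (hlen : 2 ≤ l.length)
    (hcov : ∀ v, v ∈ a :: l) : ∃ c : G.Walk a a, c.IsHamiltonianCycle := by
  obtain ⟨b, l', rfl⟩ : ∃ b l', l = b :: l' := by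
    cases l with
    | nil => simp at hlen
    | cons b l' => exact ⟨b, l', rfl⟩
  rw [List.cons_append, List.Chain, List.chain_cons] at hchain
  obtain ⟨hab, h2⟩ := hchain
  set p := mkWalk b l' a h2 with hp
  have hsup : p.support = b :: (l' ++ [a]) := support_mkWalk b l' a h2
  have hndp : p.support.Nodup := by
    rw [hsup]
    simp only [List.nodup_cons, List.mem_cons, List.mem_append, List.mem_singleton,
      List.nodup_append, List.nodup_singleton, List.not_mem_nil, not_or] at hnd ⊢
    aesop
  have hcyc : (Walk.cons hab p).IsCycle := by
    rw [SimpleGraph.Walk.cons_isCycle_iff]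
    refine ⟨SimpleGraph.Walk.IsPath.mk' hndp, ?_⟩
    apply closing_edge_not_mem p hndp
    rw [hp, length_mkWalk b l' a h2]
    simp only [List.length_cons] at hlen
    omega
  refine ⟨Walk.cons hab p, ?_⟩
  rw [SimpleGraph.Walk.isHamiltonianCycle_iff_isCycle_and_support_count_tail_eq_one]
  refine ⟨hcyc, fun v => ?_⟩
  have hsupc : (Walk.cons hab p).support = a :: p.support := by
    rw [SimpleGraph.Walk.support_cons]
  rw [hsupc, List.tail_cons]
  refine List.count_eq_one_of_mem hndp ?_
  rw [hsup]
  have := hcov v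
  simp only [List.mem_cons, List.mem_append, List.mem_singleton] at this ⊢
  tauto


lemma walk_closed {H : SimpleGraph V} (S : Set V) (hS : ∀ x y, H.Adj x y → x ∈ S → y ∈ S) :
    ∀ {x y : V} (_ : H.Walk x y), x ∈ S → y ∈ S := by
  intro x y w
  induction w with
  | nil => exact id
  | cons h _ ih => exact fun hx => ih (hS _ _ h hx)

lemma hamCycle_reachable {H : SimpleGraph V} [DecidableEq V] {x : V} {c : H.Walk x x}
    (hc : c.IsHamiltonianCycle) (y : V) : H.Reachable x y :=
  ⟨c.takeUntil y (hc.mem_support y)⟩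

lemma hamCycle_to_list [Fintype V] [DecidableEq V] {G : SimpleGraph V} {x : V} {c : G.Walk x x}
    (hc : c.IsHamiltonianCycle) :
    ∃ l : List V, List.Chain G.Adj x (l ++ [x]) ∧ (x :: l).Nodup ∧ (∀ v, v ∈ x :: l) ∧
      l.length + 1 = Fintype.card V := by
  have hcount : ∀ v, c.support.tail.count v = 1 := by
    intro v
    have := hc.isHamiltonian_tail v
    rwa [SimpleGraph.Walk.support_tail_of_not_nil c hc.1.not_nil] at this
  have hnd : c.support.tail.Nodup := List.nodup_iff_count_le_one.mpr fun v => (hcount v).le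
  have hmem : ∀ v, v ∈ c.support.tail := fun v => List.count_pos_iff.mp ((hcount v).symm ▸ one_pos)
  have hne : c.support.tail ≠ [] := fun h => by simp [h] at hmem; exact hmem x
  obtain ⟨l, z, hlz⟩ : ∃ l z, c.support.tail = l ++ [z] := ⟨_, _, (List.dropLast_append_getLast hne).symm⟩
  have hsup : c.support = x :: c.support.tail := c.support_eq_cons
  have hz : z = x := by
    have h1 : c.support.getLast? = some x := by
      rw [List.getLast?_eq_getLast (l := c.support) (by simp)]
      exact congrArg some c.getLast_support
    rw [hsup, hlz] at h1
    rw [← List.cons_append, List.getLast?_concat] at h1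
    exact (Option.some.injEq _ _ ▸ h1)
  rw [hz] at hlz
  clear hz
  refine ⟨l, ?_, ?_, ?_, ?_⟩
  · have := c.isChain_adj_support
    rw [hsup, hlz] at this
    exact this
  · rw [hlz] at hnd
    have h1 : l.Nodup := (List.nodup_append.mp hnd).1
    have h2 : x ∉ l := fun hx => (List.nodup_append'.mp hnd).2.2 hx (by simp)
    exact List.nodup_cons.mpr ⟨h2, h1⟩
  · intro v
    have := hmem v
    rw [hlz] at this
    simp only [List.mem_append, List.mem_singleton] at this
    rcases this with h | rfl
    · exact List.mem_cons_of_mem _ h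
    · exact List.mem_cons_self
  · have h1 : c.support.tail.length = c.length := by
      have ha := c.length_support
      have hb := congrArg List.length hsup
      simp only [List.length_cons] at hb
      omega
    have h2 := hc.length_eq
    rw [hlz] at h1
    simp at h1
    omega

end part1

lemma orbit_ham {U : Type*} [Fintype U] [DecidableEq U] (hU : 3 ≤ Fintype.card U)
    (mC mD : U → U) (hC : Function.Involutive mC) (hCne : ∀ u, mC u ≠ u)
    (hD : Function.Involutive mD) (hDne : ∀ u, mD u ≠ u)
    (hCD : ∀ u, mC u ≠ mD u)
    (G : SimpleGraph U) (hG : ∀ u u', G.Adj u u' ↔ (u ≠ u' ∧ (mC u = u' ∨ mD u = u')))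
    (hconn : G.Preconnected) :
    ∃ (u : U) (c : G.Walk u u), c.IsHamiltonianCycle := by
  have hne : Nonempty U := Fintype.card_pos_iff.mp (by omega)
  obtain ⟨u0⟩ := hne
  set f : ℕ → U := fun n => Nat.rec u0 (fun k x => if k % 2 = 0 then mC x else mD x) n with hf
  have hf0 : f 0 = u0 := rfl
  have hfs : ∀ n, f (n + 1) = if n % 2 = 0 then mC (f n) else mD (f n) := fun n => rfl
  have hstep_ne : ∀ n, f (n + 1) ≠ f n := by
    intro n
    rw [hfs]
    split
    · exact hCne _
    · exact hDne _
  have hback : ∀ n, (if n % 2 = 0 then mC (f (n + 1)) else mD (f (n + 1))) = f n := by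
    intro n
    rw [hfs n]
    by_cases h : n % 2 = 0 <;> simp [h, hC _, hD _]
  have hfwd : ∀ i j, i % 2 = j % 2 → f i = f j → ∀ k, f (i + k) = f (j + k) := by
    intro i j hpar heq k
    induction k with
    | zero => simpa
    | succ k ih =>
        rw [show i + (k + 1) = (i + k) + 1 by omega, show j + (k + 1) = (j + k) + 1 by omega,
          hfs, hfs, ih, show (i + k) % 2 = (j + k) % 2 by omega]
  have hodd : ∀ e i, f (i + (2 * e + 1)) ≠ f i := by
    intro e
    induction e with
    | zero => intro i; rw [show i + (2 * 0 + 1) = i + 1 by omega]; exact hstep_ne i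
    | succ e ih =>
        intro i heq
        apply ih (i + 1)
        have h1 : f (i + 2 * e + 2) = (if i % 2 = 0 then mC (f (i + 2 * e + 3))
            else mD (f (i + 2 * e + 3))) := by
          have h2 := hback (i + 2 * e + 2)
          rw [show (i + 2 * e + 2) % 2 = i % 2 by omega] at h2
          rw [show i + 2 * e + 2 + 1 = i + 2 * e + 3 by omega] at h2
          exact h2.symm
        rw [show i + (2 * (e + 1) + 1) = i + 2 * e + 3 by omega] at heq
        rw [show i + 1 + (2 * e + 1) = i + 2 * e + 2 by omega, h1, heq, hfs]
  -- minimal collision is at index 0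
  have hQ : ∃ i, ∃ j, i < j ∧ f i = f j := by
    obtain ⟨i, j, hne', heq⟩ := Finite.exists_ne_map_eq_of_infinite f
    rcases lt_or_gt_of_ne hne' with h | h
    · exact ⟨i, j, h, heq⟩
    · exact ⟨j, i, h, heq.symm⟩
  have hparity_eq : ∀ i j, i < j → f i = f j → i % 2 = j % 2 := by
    intro i j hij heq
    by_contra hpar
    have hoddd : (j - i) % 2 = 1 := by omega
    obtain ⟨e, he⟩ : ∃ e, j - i = 2 * e + 1 := ⟨(j - i) / 2, by omega⟩
    exact hodd e i (by rw [show i + (2 * e + 1) = j by omega]; exact heq.symm)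
  have hP : ∃ n, 0 < n ∧ f n = f 0 := by
    classical
    obtain ⟨j, hij, heq⟩ := Nat.find_spec hQ
    have hi0 : Nat.find hQ = 0 := by
      by_contra h0
      obtain ⟨k, hk⟩ : ∃ k, Nat.find hQ = k + 1 := ⟨Nat.find hQ - 1, by omega⟩
      have hpar := hparity_eq (Nat.find hQ) j hij heq
      have h1 : f k = f (j - 1) := by
        have ha := hback k
        have hb := hback (j - 1)
        rw [show (j - 1) % 2 = k % 2 by omega] at hb
        rw [show j - 1 + 1 = j by omega] at hb
        rw [← ha, ← hb, ← hk, heq]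
      have : k < j - 1 := by omega
      exact Nat.find_min hQ (show k < Nat.find hQ by omega) ⟨j - 1, this, h1⟩
    rw [hi0] at hij heq
    exact ⟨j, hij, heq.symm⟩
  classical
  set p := Nat.find hP with hpdef
  obtain ⟨hppos, hpf⟩ := Nat.find_spec hP
  have hpmin : ∀ m, m < p → ¬(0 < m ∧ f m = f 0) := fun m hm => Nat.find_min hP hm
  have hpeven : p % 2 = 0 := by
    have := hparity_eq 0 p hppos hpf.symm
    omega
  have hp2 : p ≠ 2 := by
    intro h2
    have : f 2 = f 0 := h2 ▸ hpf
    have e1 : f 1 = mC u0 := by have := hfs 0; simpa [hf0] using this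
    have e2 : f 2 = mD (mC u0) := by
      have h3 := hfs 1
      norm_num at h3
      rw [h3, e1]
    rw [e2, hf0] at this
    have : mC u0 = mD u0 := by
      have := congrArg mD this
      rwa [hD _] at this
    exact hCD u0 this
  have hp4 : 4 ≤ p := by
    rcases Nat.lt_or_ge p 4 with h | h
    · interval_cases p <;> omega
    · exact h
  have hper : ∀ n, f (n + p) = f n := by
    intro n
    have := hfwd p 0 (by omega) hpf n
    rw [show p + n = n + p by omega, show 0 + n = n by omega] at this
    exact this
  have hmul : ∀ q r, f (r + q * p) = f r := by
    intro q
    induction q with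
    | zero => simp
    | succ q ih =>
        intro r
        rw [show r + (q + 1) * p = (r + q * p) + p by ring, hper, ih]
  have hmod : ∀ k, f k = f (k % p) := by
    intro k
    conv_lhs => rw [show k = k % p + (k / p) * p from by rw [Nat.mod_add_div']]
    rw [hmul]
  have hinj : ∀ i j, i < j → j < p → f i ≠ f j := by
    intro i j hij hjp heq
    have hpar := hparity_eq i j hij heq
    have hbk : ∀ k, k ≤ i → f (i - k) = f (j - k) := by
      intro k
      induction k with
      | zero => simpa
      | succ k ih =>
          intro hk1
          have hk : k ≤ i := by omega
          have h1 := ih hk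
          have ha := hback (i - (k + 1))
          have hb := hback (j - (k + 1))
          rw [show (j - (k + 1)) % 2 = (i - (k + 1)) % 2 by omega] at hb
          rw [show j - (k + 1) + 1 = j - k by omega] at hb
          rw [show i - (k + 1) + 1 = i - k by omega] at ha
          rw [← ha, ← hb, h1]
    have h0 := hbk i le_rfl
    rw [Nat.sub_self] at h0
    exact hpmin (j - i) (by omega) ⟨by omega, h0.symm⟩
  have hrangecl : ∀ v w, G.Adj v w → v ∈ Set.range f → w ∈ Set.range f := by
    rintro v w hadj ⟨k, rfl⟩
    obtain ⟨hvw, hcw | hdw⟩ := (hG _ _).mp hadj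
    · rcases Nat.even_or_odd k with hk | hk
      · rw [Nat.even_iff] at hk
        refine ⟨k + 1, ?_⟩
        rw [hfs k, if_pos (by omega : k % 2 = 0), hcw]
      · rw [Nat.odd_iff] at hk
        obtain ⟨k', hk'⟩ : ∃ k', k = k' + 1 := ⟨k - 1, by omega⟩
        refine ⟨k', ?_⟩
        have := hback k'
        rw [if_pos (by omega : k' % 2 = 0), ← hk'] at this
        rw [← this, hcw]
    · rcases Nat.even_or_odd k with hk | hk
      · rw [Nat.even_iff] at hk
        refine ⟨k + p - 1, ?_⟩
        have := hback (k + p - 1)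
        rw [if_neg (by omega : ¬(k + p - 1) % 2 = 0)] at this
        rw [show k + p - 1 + 1 = k + p by omega, hper k] at this
        rw [← this, hdw]
      · rw [Nat.odd_iff] at hk
        refine ⟨k + 1, ?_⟩
        rw [hfs k, if_neg (by omega : ¬k % 2 = 0), hdw]
  have hcover : ∀ v, v ∈ Set.range f := by
    intro v
    obtain ⟨w⟩ := hconn u0 v
    exact walk_closed (Set.range f) hrangecl w ⟨0, hf0⟩
  -- assemble the list
  set l : List U := (List.range (p - 1)).map (fun i => f (i + 1)) with hl
  have hid1 : (List.range p).map f = u0 :: l := by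
    conv_lhs => rw [show p = (p - 1) + 1 by omega, List.range_succ_eq_map]
    rw [List.map_cons, List.map_map, hf0]
    rfl
  have hid2 : l ++ [u0] = (List.range p).map (fun i => f (i + 1)) := by
    conv_rhs => rw [show p = (p - 1) + 1 by omega, List.range_succ]
    rw [List.map_append, hl]
    simp only [List.map_cons, List.map_nil]
    congr 2
    rw [show p - 1 + 1 = p by omega, hpf, hf0]
  have hchain : List.Chain G.Adj u0 (l ++ [u0]) := by
    have hc1 : List.Chain' (fun i j => G.Adj (f i) (f j)) (List.range (p + 1)) := by
      rw [List.Chain', List.isChain_range_succ]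
      intro m _
      rw [hG]
      refine ⟨(hstep_ne m).symm, ?_⟩
      rw [hfs m]
      by_cases h : m % 2 = 0 <;> simp [h]
    have hc2 : List.Chain' G.Adj ((List.range (p + 1)).map f) :=
      (List.isChain_map f).mpr hc1
    rw [List.range_succ_eq_map, List.map_cons, List.map_map, hf0] at hc2
    have : (List.range p).map (f ∘ Nat.succ) = l ++ [u0] := by rw [hid2]; rfl
    rw [this] at hc2
    exact hc2
  have hnd : (u0 :: l).Nodup := by
    rw [← hid1]
    refine List.Nodup.map_on ?_ List.nodup_range
    intro x hx y hy hxy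
    rw [List.mem_range] at hx hy
    by_contra hne'
    rcases lt_or_gt_of_ne hne' with h | h
    · exact hinj x y h hy hxy
    · exact hinj y x h hx hxy.symm
  have hcov : ∀ v, v ∈ u0 :: l := by
    intro v
    rw [← hid1]
    obtain ⟨k, rfl⟩ := hcover v
    rw [hmod k]
    exact List.mem_map_of_mem (f := f) (List.mem_range.mpr (Nat.mod_lt _ (by omega)))
  have hlen : 2 ≤ l.length := by
    rw [hl, List.length_map, List.length_range]
    omega
  obtain ⟨c, hc⟩ := hamCycle_of_list u0 l hchain hnd hlen hcov
  exact ⟨u0, c, hc⟩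


section snakepart
variable {U : Type*}

def colUp (L : ℕ) (v : U) : List (U × Fin L) := (List.finRange L).map fun j => (v, j)
def colDown (L : ℕ) (v : U) : List (U × Fin L) := ((List.finRange L).reverse).map fun j => (v, j)

def snake (L : ℕ) : Bool → List U → List (U × Fin L)
  | _, [] => []
  | false, v :: vs => colDown L v ++ snake L true vs
  | true, v :: vs => colUp L v ++ snake L false vs

lemma colDown_eq_reverse (L : ℕ) (v : U) : colDown L v = (colUp L v).reverse := by
  simp [colDown, colUp, List.map_reverse]

@[simp] lemma length_colUp (L : ℕ) (v : U) : (colUp L v).length = L := by simp [colUp]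
@[simp] lemma length_colDown (L : ℕ) (v : U) : (colDown L v).length = L := by simp [colDown]

lemma colUp_ne_nil {L : ℕ} (hL : 0 < L) (v : U) : colUp L v ≠ [] := by
  intro h
  have := congrArg List.length h
  simp at this
  omega

lemma colDown_ne_nil {L : ℕ} (hL : 0 < L) (v : U) : colDown L v ≠ [] := by
  intro h
  have := congrArg List.length h
  simp at this
  omega

lemma getLast?_finRange {L : ℕ} (hL : 0 < L) :
    (List.finRange L).getLast? = some ⟨L - 1, by omega⟩ := by
  have hne : List.finRange L ≠ [] := by simp; omega
  rw [List.getLast?_eq_getLast_of_ne_nil hne, List.getLast_eq_getElem]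
  simp

lemma head?_finRange {L : ℕ} (hL : 0 < L) :
    (List.finRange L).head? = some ⟨0, hL⟩ := by
  have hne : List.finRange L ≠ [] := by simp; omega
  rw [List.head?_eq_head hne, List.head_eq_getElem]
  simp

lemma head?_colUp {L : ℕ} (hL : 0 < L) (v : U) :
    (colUp L v).head? = some (v, ⟨0, hL⟩) := by
  rw [colUp, List.head?_map, head?_finRange hL]
  rfl

lemma getLast?_colUp {L : ℕ} (hL : 0 < L) (v : U) :
    (colUp L v).getLast? = some (v, ⟨L - 1, by omega⟩) := by
  rw [colUp, List.getLast?_map, getLast?_finRange hL]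
  rfl

lemma head?_colDown {L : ℕ} (hL : 0 < L) (v : U) :
    (colDown L v).head? = some (v, ⟨L - 1, by omega⟩) := by
  rw [colDown_eq_reverse, List.head?_reverse, getLast?_colUp hL]

lemma getLast?_colDown {L : ℕ} (hL : 0 < L) (v : U) :
    (colDown L v).getLast? = some (v, ⟨0, hL⟩) := by
  rw [colDown_eq_reverse, List.getLast?_reverse, head?_colUp hL]

lemma mem_colUp_fst {L : ℕ} {v : U} {x : U × Fin L} (h : x ∈ colUp L v) : x.1 = v := by
  simp [colUp] at h
  obtain ⟨j, hj⟩ := h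
  rw [← hj]

lemma mem_colDown_fst {L : ℕ} {v : U} {x : U × Fin L} (h : x ∈ colDown L v) : x.1 = v := by
  rw [colDown_eq_reverse, List.mem_reverse] at h
  exact mem_colUp_fst h

lemma mem_colUp {L : ℕ} (v : U) (j : Fin L) : (v, j) ∈ colUp L v := by
  simp [colUp]

lemma mem_colDown {L : ℕ} (v : U) (j : Fin L) : (v, j) ∈ colDown L v := by
  rw [colDown_eq_reverse, List.mem_reverse]
  exact mem_colUp v j

lemma nodup_colUp (L : ℕ) (v : U) : (colUp L v).Nodup :=
  (List.nodup_finRange L).map (fun j j' h => by simpa using h)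

lemma nodup_colDown (L : ℕ) (v : U) : (colDown L v).Nodup := by
  rw [colDown_eq_reverse, List.nodup_reverse]
  exact nodup_colUp L v

lemma snake_cons (L : ℕ) (b : Bool) (v : U) (vs : List U) :
    snake L b (v :: vs) = (cond b (colUp L v) (colDown L v)) ++ snake L (!b) vs := by
  cases b <;> rfl

lemma fst_mem_snake {L : ℕ} : ∀ (vs : List U) (b : Bool) (x : U × Fin L),
    x ∈ snake L b vs → x.1 ∈ vs := by
  intro vs
  induction vs with
  | nil => intro b x h; cases b <;> simp [snake] at h
  | cons v vs ih =>
      intro b x h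
      rw [snake_cons, List.mem_append] at h
      rcases h with h | h
      · cases b <;> simp only [cond] at h
        · exact (mem_colDown_fst h) ▸ List.mem_cons_self
        · exact (mem_colUp_fst h) ▸ List.mem_cons_self
      · exact List.mem_cons_of_mem _ (ih (!b) x h)

lemma mem_snake {L : ℕ} : ∀ (vs : List U) (b : Bool) (v : U) (j : Fin L),
    v ∈ vs → (v, j) ∈ snake L b vs := by
  intro vs
  induction vs with
  | nil => intro b v j h; simp at h
  | cons w vs ih =>
      intro b v j h
      rw [snake_cons, List.mem_append]
      rcases List.mem_cons.mp h with rfl | h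
      · left
        cases b
        · exact mem_colDown v j
        · exact mem_colUp v j
      · exact Or.inr (ih (!b) v j h)

lemma nodup_snake {L : ℕ} : ∀ (vs : List U) (b : Bool), vs.Nodup → (snake L b vs).Nodup := by
  intro vs
  induction vs with
  | nil => intro b _; cases b <;> simp [snake]
  | cons v vs ih =>
      intro b hnd
      rw [snake_cons, List.nodup_append']
      rw [List.nodup_cons] at hnd
      refine ⟨?_, ih (!b) hnd.2, ?_⟩
      · cases b
        · exact nodup_colDown L v
        · exact nodup_colUp L v
      · intro x hx hx'
        have h1 : x.1 = v := by
          cases b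
          · exact mem_colDown_fst hx
          · exact mem_colUp_fst hx
        have h2 : x.1 ∈ vs := fst_mem_snake vs (!b) x hx'
        rw [h1] at h2
        exact hnd.1 h2

lemma length_snake {L : ℕ} : ∀ (vs : List U) (b : Bool),
    (snake L b vs).length = vs.length * L := by
  intro vs
  induction vs with
  | nil => intro b; cases b <;> simp [snake]
  | cons v vs ih =>
      intro b
      rw [snake_cons, List.length_append, ih (!b)]
      cases b <;> simp <;> ring

lemma snake_ne_nil {L : ℕ} (hL : 0 < L) (v : U) (vs : List U) (b : Bool) :
    snake L b (v :: vs) ≠ [] := by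
  intro h
  have := congrArg List.length h
  rw [length_snake] at this
  simp at this
  omega

lemma head?_snake {L : ℕ} (hL : 0 < L) (v : U) (vs : List U) (b : Bool) :
    (snake L b (v :: vs)).head? =
      some (v, if b then (⟨0, hL⟩ : Fin L) else ⟨L - 1, by omega⟩) := by
  rw [snake_cons]
  cases b
  · simp only [cond]
    rw [List.head?_append_of_ne_nil _ (colDown_ne_nil hL v), head?_colDown hL]
    rfl
  · simp only [cond]
    rw [List.head?_append_of_ne_nil _ (colUp_ne_nil hL v), head?_colUp hL]
    rfl


def MSpec (mC mD : U → U) (L : ℕ) (M : SimpleGraph (U × Fin L)) : Prop :=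
  ∀ (u u' : U) (a a' : Fin L), M.Adj (u, a) (u', a') ↔
    ((u = u' ∧ (a.val + 1 = a'.val ∨ a'.val + 1 = a.val)) ∨
     (a.val = 0 ∧ a'.val = 0 ∧ u ≠ u' ∧ mC u = u') ∨
     (a.val = L - 1 ∧ a'.val = L - 1 ∧ u ≠ u' ∧ mD u = u'))

lemma chain'_colUp {mC mD : U → U} {L : ℕ} {M : SimpleGraph (U × Fin L)}
    (hM : MSpec mC mD L M) (v : U) : List.Chain' M.Adj (colUp L v) := by
  rw [colUp, List.Chain', List.isChain_map, List.isChain_iff_getElem]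
  intro i h
  simp only [List.length_finRange] at h
  rw [List.getElem_finRange, List.getElem_finRange]
  rw [hM]
  exact Or.inl ⟨rfl, Or.inl rfl⟩

lemma chain'_colDown {mC mD : U → U} {L : ℕ} {M : SimpleGraph (U × Fin L)}
    (hM : MSpec mC mD L M) (v : U) : List.Chain' M.Adj (colDown L v) := by
  rw [colDown_eq_reverse, List.Chain', List.isChain_reverse]
  rw [colUp, List.isChain_map, List.isChain_iff_getElem]
  intro i h
  simp only [List.length_finRange] at h
  rw [List.getElem_finRange, List.getElem_finRange]
  show M.Adj (v, ⟨i + 1, _⟩) (v, ⟨i, _⟩)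
  rw [hM]
  exact Or.inl ⟨rfl, Or.inr rfl⟩

lemma snake_ham [DecidableEq U] {mC mD : U → U}
    (hC : Function.Involutive mC) (hD : Function.Involutive mD)
    {L : ℕ} (hL : 2 ≤ L) {M : SimpleGraph (U × Fin L)} (hM : MSpec mC mD L M)
    (a : U) (l : List U)
    (hchain : List.Chain (fun x y => x ≠ y ∧ (mC x = y ∨ mD x = y)) a (l ++ [a]))
    (hnd : (a :: l).Nodup) (hlen : 2 ≤ l.length) (hfirst : mC a = l.headD a) :
    List.Chain' M.Adj (snake L false (a :: l) ++ [(a, ⟨L - 1, by omega⟩)]) := by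
  have hLpos : 0 < L := by omega
  have hal : a ∉ l := (List.nodup_cons.mp hnd).1
  have hlnd : l.Nodup := (List.nodup_cons.mp hnd).2
  have aux : ∀ (rest : List U) (v : U) (b : Bool),
      (v :: rest <:+ l ∨ (v = a ∧ rest = l)) →
      List.Chain (fun x y => x ≠ y ∧ (mC x = y ∨ mD x = y)) v (rest ++ [a]) →
      (cond b mD mC) v = (rest ++ [a]).headD a →
      List.Chain' M.Adj (snake L b (v :: rest) ++ [(a, ⟨L - 1, by omega⟩)]) := by
    intro rest
    induction rest with
    | nil =>
        intro v b hsuf hch hexit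
        have hva : v ∈ l := by
          rcases hsuf with h | ⟨rfl, hr⟩
          · exact h.subset (List.mem_cons_self)
          · rw [← hr] at hlen; simp at hlen
        have hvne : v ≠ a := fun h => hal (h ▸ hva)
        cases b
        · exfalso
          simp only [cond, List.nil_append, List.headD_cons] at hexit
          -- hexit : mC v = a
          have hva' : v = mC a := by
            have h1 := congrArg mC hexit
            rw [hC] at h1
            exact h1
          obtain ⟨h⟩ : (([v] <:+ l) ∧ True) := by
            rcases hsuf with h | ⟨rfl, hr⟩
            · exact ⟨h, trivial⟩
            · rw [← hr] at hlen; simp at hlen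
          obtain ⟨t', ht'⟩ := h
          cases t' with
          | nil =>
              simp at ht'
              rw [← ht'] at hlen
              simp at hlen
          | cons c t'' =>
              have hl2 : l = c :: (t'' ++ [v]) := by rw [← ht']; simp
              have hvc : v = c := by
                rw [hva', hfirst, hl2, List.headD_cons]
              rw [hl2, List.nodup_cons] at hlnd
              exact hlnd.1 (by rw [← hvc]; exact List.mem_append_right _ (List.mem_singleton.mpr rfl))
        · simp only [cond, List.nil_append, List.headD_cons] at hexit
          -- hexit : mD v = a
          show List.Chain' M.Adj (snake L true [v] ++ [(a, ⟨L - 1, by omega⟩)])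
          have hsn : snake L true [v] = colUp L v := by
            rw [snake_cons]
            simp [snake]
          rw [hsn]
          apply List.isChain_append.mpr
          refine ⟨chain'_colUp hM v, List.isChain_singleton _, ?_⟩
          intro p hp q hq
          rw [getLast?_colUp hLpos] at hp
          simp only [List.head?_cons, Option.mem_some_iff] at hp hq
          subst hp
          subst hq
          rw [hM]
          exact Or.inr (Or.inr ⟨rfl, rfl, hvne, hexit⟩)
    | cons w rest' ih =>
        intro v b hsuf hch hexit
        rw [List.cons_append, List.Chain, List.chain_cons] at hch
        obtain ⟨hvw, hch'⟩ := hch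
        simp only [List.cons_append, List.headD_cons] at hexit
        -- hexit : cond b mD mC v = w
        have hsuf' : w :: rest' <:+ l := by
          rcases hsuf with h | ⟨rfl, hr⟩
          · exact (List.suffix_cons v (w :: rest')).trans h
          · rw [← hr]
        have hvnn : v ≠ (rest' ++ [a]).headD a := by
          cases rest' with
          | nil =>
              simp only [List.nil_append, List.headD_cons]
              rcases hsuf with h | ⟨rfl, hr⟩
              · intro hv
                exact hal (hv ▸ h.subset (List.mem_cons_self))
              · rw [← hr] at hlen; simp at hlen
          | cons r t =>
              simp only [List.cons_append, List.headD_cons]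
              rcases hsuf with h | ⟨rfl, hr⟩
              · have hnd2 : (v :: w :: r :: t).Nodup := hlnd.sublist h.sublist
                intro he
                exact (List.nodup_cons.mp hnd2).1 (he ▸ List.mem_cons_of_mem _ (List.mem_cons_self))
              · intro he
                apply hal
                rw [he, ← hr]
                exact List.mem_cons_of_mem _ (List.mem_cons_self)
        have hRw : w ≠ (rest' ++ [a]).headD a ∧
            (mC w = (rest' ++ [a]).headD a ∨ mD w = (rest' ++ [a]).headD a) := by
          cases rest' with
          | nil => exact (List.chain_cons.mp hch').1
          | cons r t => exact (List.chain_cons.mp hch').1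
        have hbw : (cond b mD mC) w = v := by
          cases b
          · simp only [cond] at hexit ⊢; rw [← hexit, hC]
          · simp only [cond] at hexit ⊢; rw [← hexit, hD]
        have hexit' : (cond (!b) mD mC) w = (rest' ++ [a]).headD a := by
          rcases hRw.2 with h | h
          · cases b
            · refine absurd ?_ hvnn
              rw [← hbw]
              simp only [cond]
              exact h
            · simpa only [cond, Bool.not_true] using h
          · cases b
            · simpa only [cond, Bool.not_false] using h
            · refine absurd ?_ hvnn
              rw [← hbw]
              simp only [cond]
              exact h
        have IH := ih w (!b) (Or.inl hsuf') hch' hexit'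
        rw [snake_cons, List.append_assoc]
        apply List.isChain_append.mpr
        refine ⟨?_, IH, ?_⟩
        · cases b
          · exact chain'_colDown hM v
          · exact chain'_colUp hM v
        · intro p hp q hq
          rw [List.head?_append_of_ne_nil _ (snake_ne_nil hLpos w rest' (!b)),
            head?_snake hLpos w rest' (!b)] at hq
          cases b
          · simp only [cond] at hp hexit
            rw [getLast?_colDown hLpos] at hp
            simp only [Option.mem_some_iff, Bool.not_false, if_pos rfl] at hp hq
            subst hp; subst hq
            rw [hM]
            exact Or.inr (Or.inl ⟨rfl, rfl, hvw.1, hexit⟩)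
          · simp only [cond] at hp hexit
            rw [getLast?_colUp hLpos] at hp
            simp only [Option.mem_some_iff, Bool.not_true] at hp hq
            subst hp; subst hq
            rw [hM]
            refine Or.inr (Or.inr ⟨rfl, ?_, hvw.1, hexit⟩)
            simp
  have hexit0 : (cond false mD mC) a = (l ++ [a]).headD a := by
    cases l with
    | nil => simp at hlen
    | cons b0 t =>
        simp only [cond, List.cons_append, List.headD_cons]
        simpa using hfirst
  exact aux l a false (Or.inr ⟨rfl, rfl⟩) hchain hexit0

end snakepart

lemma chain_last_rel {α : Type*} (S : α → α → Prop) :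
    ∀ (l : List α) (v w : α), List.Chain S v (l ++ [w]) →
      S ((v :: l).getLast (List.cons_ne_nil v l)) w := by
  intro l
  induction l with
  | nil => intro v w h; simpa using (List.chain_cons.mp h).1
  | cons c t ih =>
      intro v w h
      rw [List.cons_append, List.Chain, List.chain_cons] at h
      have := ih c w h.2
      rwa [List.getLast_cons (List.cons_ne_nil c t)]

lemma chain_cycle_reverse {α : Type*} (S : α → α → Prop) (hsym : ∀ x y, S x y → S y x)
    (a : α) (l : List α) (h : List.Chain S a (l ++ [a])) :
    List.Chain S a (l.reverse ++ [a]) := by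
  have h1 : List.Chain' S (a :: (l ++ [a])) := h
  have h2 : List.Chain' (flip S) (a :: (l ++ [a])) := h1.imp (fun x y hxy => hsym x y hxy)
  have h3 : List.Chain' S ((a :: (l ++ [a])).reverse) := List.isChain_reverse.mpr h2
  have h4 : (a :: (l ++ [a])).reverse = a :: (l.reverse ++ [a]) := by simp
  rw [h4] at h3
  exact h3

lemma headD_ne_getLast {α : Type*} (d : α) (l : List α) (h : l ≠ []) (hnd : l.Nodup)
    (hlen : 2 ≤ l.length) : l.headD d ≠ l.getLast h := by
  cases l with
  | nil => simp at h
  | cons b0 t =>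
      have ht : t ≠ [] := by
        intro hteq
        rw [hteq] at hlen
        simp at hlen
      rw [List.headD_cons, List.getLast_cons ht]
      intro he
      rw [List.nodup_cons] at hnd
      exact hnd.1 (he ▸ List.getLast_mem ht)

lemma snake_assembly {U : Type*} [Fintype U] [DecidableEq U] {mC mD : U → U}
    (hC : Function.Involutive mC) (hD : Function.Involutive mD)
    {L : ℕ} (hL : 2 ≤ L) {M : SimpleGraph (U × Fin L)} (hM : MSpec mC mD L M)
    (a : U) (l : List U)
    (hchain : List.Chain (fun x y => x ≠ y ∧ (mC x = y ∨ mD x = y)) a (l ++ [a]))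
    (hnd : (a :: l).Nodup) (hlen : 2 ≤ l.length) (hcov : ∀ v, v ∈ a :: l)
    (hfirst : mC a = l.headD a) :
    ∃ (x : U × Fin L) (cM : M.Walk x x), cM.IsHamiltonianCycle := by
  have hLpos : 0 < L := by omega
  have hch' := snake_ham hC hD hL hM a l hchain hnd hlen hfirst
  have hcons : (a, (⟨L - 1, by omega⟩ : Fin L)) :: (snake L false (a :: l)).tail
      = snake L false (a :: l) := by
    refine List.cons_head?_tail (Option.mem_def.mpr ?_)
    rw [head?_snake hLpos]
    simp
  have hchainM : List.Chain M.Adj (a, (⟨L - 1, by omega⟩ : Fin L))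
      ((snake L false (a :: l)).tail ++ [(a, (⟨L - 1, by omega⟩ : Fin L))]) := by
    have h3 : List.Chain' M.Adj
        (((a, (⟨L - 1, by omega⟩ : Fin L)) :: (snake L false (a :: l)).tail)
          ++ [(a, (⟨L - 1, by omega⟩ : Fin L))]) := by
      rw [hcons]
      exact hch'
    exact h3
  have hnodup : ((a, (⟨L - 1, by omega⟩ : Fin L)) :: (snake L false (a :: l)).tail).Nodup := by
    rw [hcons]
    exact nodup_snake _ false hnd
  have hcov2 : ∀ y, y ∈ (a, (⟨L - 1, by omega⟩ : Fin L)) :: (snake L false (a :: l)).tail := by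
    intro y
    rw [hcons]
    obtain ⟨w, j⟩ := y
    exact mem_snake _ false w j (hcov w)
  have hlen2 : 2 ≤ (snake L false (a :: l)).tail.length := by
    have h4 := congrArg List.length hcons
    rw [length_snake] at h4
    simp only [List.length_cons] at h4
    have h5 : 3 * 2 ≤ (l.length + 1) * L := Nat.mul_le_mul (by omega) hL
    omega
  obtain ⟨cM, hcM⟩ := hamCycle_of_list _ _ hchainM hnodup hlen2 hcov2
  exact ⟨_, cM, hcM⟩

theorem matching_network_hamiltonian_iff
    {U : Type*} [Fintype U] [DecidableEq U] (hU : 3 ≤ Fintype.card U)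
    (mC mD : U → U)
    (hC : Function.Involutive mC) (hCne : ∀ u, mC u ≠ u)
    (hD : Function.Involutive mD) (hDne : ∀ u, mD u ≠ u)
    (G : SimpleGraph U)
    (hG : ∀ u u' : U, G.Adj u u' ↔ (u ≠ u' ∧ (mC u = u' ∨ mD u = u')))
    (L : ℕ) (hL : 2 ≤ L)
    (M : SimpleGraph (U × Fin L))
    (hM : ∀ (u u' : U) (a a' : Fin L), M.Adj (u, a) (u', a') ↔
      ((u = u' ∧ (a.val + 1 = a'.val ∨ a'.val + 1 = a.val)) ∨
       (a.val = 0 ∧ a'.val = 0 ∧ u ≠ u' ∧ mC u = u') ∨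
       (a.val = L - 1 ∧ a'.val = L - 1 ∧ u ≠ u' ∧ mD u = u'))) :
    (∃ (x : U × Fin L) (c : M.Walk x x), c.IsHamiltonianCycle) ↔
    (∃ (u : U) (c : G.Walk u u), c.IsHamiltonianCycle) := by
  have z0 : Fin L := ⟨0, by omega⟩
  constructor
  · rintro ⟨x, c, hc⟩
    have hMreach : ∀ y z : U × Fin L, M.Reachable y z := fun y z =>
      (hamCycle_reachable hc y).symm.trans (hamCycle_reachable hc z)
    have hCD : ∀ u, mC u ≠ mD u := by
      intro u heq
      have hS : ∀ y z : U × Fin L, M.Adj y z → (y.1 = u ∨ y.1 = mC u) →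
          (z.1 = u ∨ z.1 = mC u) := by
        rintro ⟨u1, a1⟩ ⟨u2, a2⟩ hadj hmem
        rw [hM] at hadj
        simp only at hmem ⊢
        rcases hadj with ⟨rfl, _⟩ | ⟨_, _, _, hCeq⟩ | ⟨_, _, _, hDeq⟩
        · exact hmem
        · rcases hmem with h | h
          · exact Or.inr (by rw [← hCeq, h])
          · exact Or.inl (by rw [← hCeq, h, hC])
        · rcases hmem with h | h
          · exact Or.inr (by rw [← hDeq, h]; exact heq.symm)
          · exact Or.inl (by rw [← hDeq, h, heq, hD])
      have hall : ∀ w : U, w = u ∨ w = mC u := by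
        intro w
        obtain ⟨wlk⟩ := hMreach (u, z0) (w, z0)
        exact walk_closed _ hS wlk (Or.inl rfl)
      have hsub : (Finset.univ : Finset U) ⊆ {u, mC u} := by
        intro w _
        rcases hall w with rfl | rfl <;> simp
      have hcard := Finset.card_le_card hsub
      rw [Finset.card_univ] at hcard
      have : ({u, mC u} : Finset U).card ≤ 2 := Finset.card_insert_le u {mC u} |>.trans (by simp)
      omega
    have hGpre : G.Preconnected := by
      intro z w
      have hS : ∀ y1 y2 : U × Fin L, M.Adj y1 y2 → G.Reachable z y1.1 → G.Reachable z y2.1 := by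
        rintro ⟨u1, a1⟩ ⟨u2, a2⟩ hadj hy1
        rw [hM] at hadj
        rcases hadj with ⟨rfl, _⟩ | ⟨_, _, hne, hCeq⟩ | ⟨_, _, hne, hDeq⟩
        · exact hy1
        · exact hy1.trans (SimpleGraph.Adj.reachable ((hG _ _).mpr ⟨hne, Or.inl hCeq⟩))
        · exact hy1.trans (SimpleGraph.Adj.reachable ((hG _ _).mpr ⟨hne, Or.inr hDeq⟩))
      obtain ⟨wlk⟩ := hMreach (z, z0) (w, z0)
      exact walk_closed {y : U × Fin L | G.Reachable z y.1} hS wlk (SimpleGraph.Reachable.refl z)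
    exact orbit_ham hU mC mD hC hCne hD hDne hCD G hG hGpre
  · rintro ⟨u, c, hc⟩
    obtain ⟨l, hchainG, hnd, hcov, hlenEq⟩ := hamCycle_to_list hc
    have hlen : 2 ≤ l.length := by omega
    have hlne : l ≠ [] := by
      intro h
      rw [h] at hlen
      simp at hlen
    have hR : List.Chain (fun x y => x ≠ y ∧ (mC x = y ∨ mD x = y)) u (l ++ [u]) :=
      List.Chain.imp (fun x y h => (hG x y).mp h) hchainG
    obtain ⟨b0, t, rfl⟩ : ∃ b0 t, l = b0 :: t := by
      cases l with
      | nil => simp at hlen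
      | cons b0 t => exact ⟨b0, t, rfl⟩
    have hfe : u ≠ b0 ∧ (mC u = b0 ∨ mD u = b0) := by
      rw [List.cons_append, List.Chain, List.chain_cons] at hR
      exact hR.1
    by_cases hC0 : mC u = b0
    · exact snake_assembly hC hD hL hM u (b0 :: t) hR hnd hlen hcov
        (by rw [List.headD_cons]; exact hC0)
    · have hD0 : mD u = b0 := by
        rcases hfe.2 with h | h
        · exact absurd h hC0
        · exact h
      have hsym : ∀ x y : U, (x ≠ y ∧ (mC x = y ∨ mD x = y)) →
          (y ≠ x ∧ (mC y = x ∨ mD y = x)) := by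
        rintro x y ⟨hxy, h | h⟩
        · exact ⟨hxy.symm, Or.inl (by rw [← h, hC])⟩
        · exact ⟨hxy.symm, Or.inr (by rw [← h, hD])⟩
      have hRrev := chain_cycle_reverse _ hsym u (b0 :: t) hR
      have hndrev : (u :: (b0 :: t).reverse).Nodup := by
        rw [List.nodup_cons] at hnd ⊢
        rw [List.mem_reverse, List.nodup_reverse]
        exact hnd
      have hcovrev : ∀ v, v ∈ u :: (b0 :: t).reverse := by
        intro v
        have := hcov v
        rw [List.mem_cons] at this ⊢
        rwa [List.mem_reverse]
      have hlenrev : 2 ≤ (b0 :: t).reverse.length := by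
        rw [List.length_reverse]
        exact hlen
      -- compute first element of reversed list
      have hz : mC u = ((b0 :: t).reverse).headD u := by
        have hzrel := chain_last_rel _ (b0 :: t) u u hR
        rw [List.getLast_cons (List.cons_ne_nil b0 t)] at hzrel
        have hzval : ((b0 :: t).reverse).headD u = (b0 :: t).getLast (List.cons_ne_nil b0 t) := by
          have h1 : ((b0 :: t).reverse).head? = some ((b0 :: t).getLast (List.cons_ne_nil b0 t)) := by
            rw [List.head?_reverse, List.getLast?_eq_getLast_of_ne_nil]
          cases hrev : (b0 :: t).reverse with
          | nil => exact absurd (congrArg List.length hrev) (by simp)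
          | cons z' t' =>
              rw [hrev] at h1
              simp only [List.head?_cons, Option.some.injEq] at h1
              rw [List.headD_cons, h1]
        rw [hzval]
        rcases hzrel.2 with h | h
        · rw [← h, hC]
        · exfalso
          have h2 : mD u = (b0 :: t).getLast (List.cons_ne_nil b0 t) := by rw [← h, hD]
          have h3 : b0 = (b0 :: t).getLast (List.cons_ne_nil b0 t) := hD0.symm.trans h2
          exact headD_ne_getLast u (b0 :: t) (List.cons_ne_nil b0 t)
            (List.nodup_cons.mp hnd).2 hlen (by rw [List.headD_cons]; exact h3)
      exact snake_assembly hC hD hL hM u ((b0 :: t).reverse) hRrev hndrev hlenrev hcovrev hz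
end

section
/- Let U be a finite type with at least 2 elements and let m_C, m_D : U → U be fixed-point-free involutions (perfect matchings on U). Let G be the simple graph on U in which distinct u, u' are adjacent if and only if m_C(u) = u' or m_D(u) = u'. Let L ≥ 2 be an integer and let M be the simple graph on U × Fin L in which (u, a) and (u', a') are adjacent if and only if: u = u' and |a − a'| = 1; or a = a' = 0, u ≠ u' and m_C(u) = u'; or a = a' = L − 1, u ≠ u' and m_D(u) = u'. Then the number of connected components of M equals the number of connected components of G. -/
theorem matching_network_component_count
    {U : Type*} [Fintype U] [DecidableEq U] (hU : 2 ≤ Fintype.card U)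
    (mC mD : U → U)
    (hC : Function.Involutive mC) (hCne : ∀ u, mC u ≠ u)
    (hD : Function.Involutive mD) (hDne : ∀ u, mD u ≠ u)
    (G : SimpleGraph U)
    (hG : ∀ u u' : U, G.Adj u u' ↔ (u ≠ u' ∧ (mC u = u' ∨ mD u = u')))
    (L : ℕ) (hL : 2 ≤ L)
    (M : SimpleGraph (U × Fin L))
    (hM : ∀ (u u' : U) (a a' : Fin L), M.Adj (u, a) (u', a') ↔
      ((u = u' ∧ (a.val + 1 = a'.val ∨ a'.val + 1 = a.val)) ∨
       (a.val = 0 ∧ a'.val = 0 ∧ u ≠ u' ∧ mC u = u') ∨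
       (a.val = L - 1 ∧ a'.val = L - 1 ∧ u ≠ u' ∧ mD u = u'))) :
    Nat.card M.ConnectedComponent = Nat.card G.ConnectedComponent := by
  have hpos : 0 < L := by omega
  -- vertical reachability
  have hvert : ∀ (u : U) (a : Fin L), M.Reachable (u, a) (u, ⟨0, hpos⟩) := by
    intro u a
    obtain ⟨n, hn⟩ := a
    induction n with
    | zero => rfl
    | succ k ih =>
      have hk : k < L := by omega
      have adj : M.Adj (u, ⟨k + 1, hn⟩) (u, ⟨k, hk⟩) := by
        rw [hM]; exact Or.inl ⟨rfl, Or.inr rfl⟩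
      exact adj.reachable.trans (ih hk)
  -- M adjacency implies G reachability of first coordinates
  have hMG : ∀ v w : U × Fin L, M.Adj v w → G.Reachable v.1 w.1 := by
    rintro ⟨u, a⟩ ⟨u', a'⟩ h
    rw [hM] at h
    rcases h with ⟨rfl, _⟩ | ⟨_, _, hne, hc⟩ | ⟨_, _, hne, hd⟩
    · rfl
    · exact ((hG u u').mpr ⟨hne, Or.inl hc⟩).reachable
    · exact ((hG u u').mpr ⟨hne, Or.inr hd⟩).reachable
  -- G adjacency implies M reachability at level 0
  have hGM : ∀ u u' : U, G.Adj u u' →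
      M.Reachable (u, ⟨0, hpos⟩) (u', ⟨0, hpos⟩) := by
    intro u u' h
    rw [hG] at h
    obtain ⟨hne, hc | hd⟩ := h
    · have adj : M.Adj (u, ⟨0, hpos⟩) (u', ⟨0, hpos⟩) := by
        rw [hM]; exact Or.inr (Or.inl ⟨rfl, rfl, hne, hc⟩)
      exact adj.reachable
    · have hlt : L - 1 < L := by omega
      have adj : M.Adj (u, ⟨L - 1, hlt⟩) (u', ⟨L - 1, hlt⟩) := by
        rw [hM]; exact Or.inr (Or.inr ⟨rfl, rfl, hne, hd⟩)
      exact ((hvert u ⟨L - 1, hlt⟩).symm.trans adj.reachable).trans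
        (hvert u' ⟨L - 1, hlt⟩)
  have hMG' : ∀ (v w : U × Fin L), M.Walk v w →
      G.connectedComponentMk v.1 = G.connectedComponentMk w.1 := by
    intro v w p
    induction p with
    | nil => rfl
    | cons h _ ih =>
      exact (SimpleGraph.ConnectedComponent.sound (hMG _ _ h)).trans ih
  have hGM' : ∀ (v w : U), G.Walk v w →
      M.connectedComponentMk (v, ⟨0, hpos⟩) = M.connectedComponentMk (w, ⟨0, hpos⟩) := by
    intro v w p
    induction p with
    | nil => rfl
    | cons h _ ih =>
      exact (SimpleGraph.ConnectedComponent.sound (hGM _ _ h)).trans ih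
  let f : M.ConnectedComponent → G.ConnectedComponent :=
    SimpleGraph.ConnectedComponent.lift (fun p => G.connectedComponentMk p.1)
      (fun v w p _ => hMG' v w p)
  let g : G.ConnectedComponent → M.ConnectedComponent :=
    SimpleGraph.ConnectedComponent.lift
      (fun u => M.connectedComponentMk (u, ⟨0, hpos⟩))
      (fun v w p _ => hGM' v w p)
  refine Nat.card_congr ⟨f, g, ?_, ?_⟩
  · refine SimpleGraph.ConnectedComponent.ind ?_
    rintro ⟨u, a⟩
    exact SimpleGraph.ConnectedComponent.sound (hvert u a).symm
  · refine SimpleGraph.ConnectedComponent.ind ?_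
    intro u
    rfl
end

section
/- For integers k ≥ 1 and Γ ≥ 1, set L = 2^k + 1 and let 𝒩 be the following simple graph. Its vertices are the path vertices p(i, a) for i ∈ Fin Γ and 0 ≤ a ≤ L − 1, together with the highway vertices h(ℓ, a) for 1 ≤ ℓ ≤ k and those 0 ≤ a ≤ L − 1 with 2^ℓ dividing a. Its edges are: p(i, a) ~ p(i, a + 1) for 0 ≤ a ≤ L − 2; h(ℓ, a) ~ h(ℓ, a + 2^ℓ) whenever both exist; h(1, a) ~ p(i, a) for every i ∈ Fin Γ and every a with 2 dividing a; and h(ℓ, a) ~ h(ℓ + 1, a) whenever both exist. Then 𝒩 has exactly Γ·(2^k + 1) + 2^k + k − 1 vertices, is connected, and has diameter at most 4k + 2. -/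
/-- Vertices of the network: path vertices `p(i, a)` for `i ∈ Fin Γ` and `0 ≤ a ≤ L - 1`
(the left summand), together with highway vertices `h(ℓ, a)` for `1 ≤ ℓ ≤ k`
(encoded by `x : Fin k` via `ℓ = x.val + 1`) and those `0 ≤ a ≤ L - 1` with `2 ^ ℓ ∣ a`
(the right summand). -/
abbrev NetV (Γ k L : ℕ) : Type :=
  (Fin Γ × Fin L) ⊕ {x : Fin k × Fin L // 2 ^ (x.1.val + 1) ∣ x.2.val}

/-- The edges of the network:
`p(i, a) ~ p(i, a + 1)`; `h(ℓ, a) ~ h(ℓ, a + 2 ^ ℓ)` whenever both exist;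
`h(1, a) ~ p(i, a)` for every `i` (the divisibility `2 ∣ a` is automatic);
and `h(ℓ, a) ~ h(ℓ + 1, a)` whenever both exist. -/
def netRel (Γ k L : ℕ) : NetV Γ k L → NetV Γ k L → Prop
  | Sum.inl (i, a), Sum.inl (i', a') => i = i' ∧ a.val + 1 = a'.val
  | Sum.inr x, Sum.inr y =>
      (x.val.1 = y.val.1 ∧ x.val.2.val + 2 ^ (x.val.1.val + 1) = y.val.2.val) ∨
      (x.val.1.val + 1 = y.val.1.val ∧ x.val.2.val = y.val.2.val)
  | Sum.inr x, Sum.inl (i, a) => x.val.1.val = 0 ∧ x.val.2.val = a.val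
  | _, _ => False

lemma card_dvd_fin (n d : ℕ) (hd : 0 < d) :
    Fintype.card {a : Fin (n+1) // d ∣ a.val} = n / d + 1 := by
  rw [show n / d + 1 = Fintype.card (Fin (n / d + 1)) by simp]
  apply Fintype.card_congr
  refine ⟨fun a => ⟨a.val.val / d, ?_⟩, fun j => ⟨⟨j.val * d, ?_⟩, ⟨j.val, Nat.mul_comm _ _⟩⟩, ?_, ?_⟩
  · have := Nat.div_le_div_right (c := d) (Nat.lt_succ_iff.mp a.val.isLt)
    omega
  · have : j.val * d ≤ (n / d) * d := Nat.mul_le_mul_right d (Nat.lt_succ_iff.mp j.isLt)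
    have := Nat.div_mul_le_self n d
    omega
  · rintro ⟨⟨a, ha⟩, hd2⟩
    ext
    exact Nat.div_mul_cancel hd2
  · rintro ⟨j, hj⟩
    ext
    exact Nat.mul_div_cancel _ hd

lemma geom_two_sum (k : ℕ) : ∑ j ∈ Finset.range k, 2 ^ j = 2 ^ k - 1 := by
  induction k with
  | zero => simp
  | succ m ihm =>
    rw [Finset.sum_range_succ, ihm, pow_succ]
    have : 1 ≤ 2^m := Nat.one_le_two_pow
    omega

lemma net_card (Γ k : ℕ) (hk : 1 ≤ k) :
    Fintype.card (NetV Γ k (2^k+1)) = Γ * (2 ^ k + 1) + 2 ^ k + k - 1 := by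
  have h1 : 1 ≤ 2^k := Nat.one_le_two_pow
  rw [Fintype.card_sum, Fintype.card_prod, Fintype.card_fin, Fintype.card_fin]
  have : Fintype.card {x : Fin k × Fin (2^k+1) // 2 ^ (x.1.val + 1) ∣ x.2.val}
      = ∑ i : Fin k, (2^k / 2^(i.val+1) + 1) := by
    rw [Fintype.card_congr (Equiv.subtypeProdEquivSigmaSubtype (fun (i : Fin k) (a : Fin (2^k+1)) => 2^(i.val+1) ∣ a.val)), Fintype.card_sigma]
    congr 1
    ext i
    exact card_dvd_fin _ _ (by positivity)
  rw [this]
  have h2 : ∀ i : Fin k, 2^k / 2^(i.val+1) + 1 = 2^(k-1-i.val) + 1 := by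
    intro i
    rw [Nat.pow_div (by omega) (by norm_num)]
    congr 2
    omega
  rw [Finset.sum_congr rfl (fun i _ => h2 i), Finset.sum_add_distrib]
  simp only [Finset.sum_const, Finset.card_univ, Fintype.card_fin, smul_eq_mul, mul_one]
  have h3 : ∑ i : Fin k, 2^(k-1-i.val) = 2^k - 1 := by
    rw [Fin.sum_univ_eq_sum_range (fun i => 2^(k-1-i)) k]
    rw [show (fun i => 2^(k-1-i)) = (fun i => 2^(k-1-i)) from rfl]
    have := Finset.sum_range_reflect (fun i => 2^i) k
    simp only [Nat.sub_sub] at this ⊢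
    rw [this, geom_two_sum]
  rw [h3]
  omega

def netHub (Γ k : ℕ) (hk : 1 ≤ k) : NetV Γ k (2^k+1) :=
  Sum.inr ⟨(⟨k-1, by omega⟩, ⟨0, Nat.succ_pos _⟩), dvd_zero _⟩

lemma net_key (Γ k : ℕ) (hk : 1 ≤ k) :
    ∀ d (x : Fin k) (a : Fin (2^k+1)) (h : 2 ^ (x.val + 1) ∣ a.val),
      k - 1 - x.val ≤ d →
      ∃ w : (SimpleGraph.fromRel (netRel Γ k (2^k+1))).Walk
          (Sum.inr ⟨(x, a), h⟩) (netHub Γ k hk), w.length ≤ 2 * (k - 1 - x.val) + 1 := by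
  have hp : 1 ≤ 2^k := Nat.one_le_two_pow
  have top : ∀ (x : Fin k) (a : Fin (2^k+1)) (h : 2 ^ (x.val + 1) ∣ a.val),
      x.val = k - 1 →
      ∃ w : (SimpleGraph.fromRel (netRel Γ k (2^k+1))).Walk
          (Sum.inr ⟨(x, a), h⟩) (netHub Γ k hk), w.length ≤ 1 := by
    intro x a h hx
    have hxk : x.val + 1 = k := by omega
    have ha : a.val = 0 ∨ a.val = 2^k := by
      have h2 : 2^k ∣ a.val := by rwa [hxk] at h
      have h3 : a.val < 2^k + 1 := a.isLt
      rcases h2 with ⟨c, hc⟩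
      rcases Nat.eq_zero_or_pos c with h0 | h0
      · left; rw [h0, mul_zero] at hc; exact hc
      · right
        have : 2^k * 1 ≤ 2^k * c := Nat.mul_le_mul_left _ h0
        omega
    rcases ha with ha | ha
    · have hve : (Sum.inr ⟨(x, a), h⟩ : NetV Γ k (2^k+1)) = netHub Γ k hk := by
        unfold netHub
        congr 1
        exact Subtype.ext (Prod.ext (Fin.ext hx) (Fin.ext ha))
      exact ⟨(SimpleGraph.Walk.nil).copy hve.symm rfl, by simp⟩
    · have hadj : (SimpleGraph.fromRel (netRel Γ k (2^k+1))).Adj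
          (Sum.inr ⟨(x, a), h⟩) (netHub Γ k hk) := by
        rw [SimpleGraph.fromRel_adj]
        refine ⟨?_, Or.inr ?_⟩
        · unfold netHub
          intro hc
          rw [Sum.inr.injEq, Subtype.mk.injEq, Prod.mk.injEq] at hc
          have h0 : a.val = 0 := congrArg Fin.val hc.2
          omega
        · refine Or.inl ⟨Fin.ext (show k - 1 = x.val from hx.symm), ?_⟩
          show 0 + 2 ^ (k - 1 + 1) = a.val
          have he : k - 1 + 1 = k := by omega
          rw [he]
          omega
      exact ⟨hadj.toWalk, by simp⟩
  intro d
  induction d with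
  | zero =>
    intro x a h hle
    exact (top x a h (by omega)).imp (fun w hw => by omega)
  | succ d ih =>
    intro x a h hle
    by_cases hx : x.val = k - 1
    · exact (top x a h hx).imp (fun w hw => by omega)
    · have hxlt : x.val < k - 1 := by omega
      set x' : Fin k := ⟨x.val + 1, by omega⟩ with hx'
      have hstep : k - 1 - x'.val = k - 1 - x.val - 1 := by simp [hx']; omega
      by_cases h2 : 2 ^ (x.val + 2) ∣ a.val
      · have h2' : 2 ^ (x'.val + 1) ∣ a.val := h2
        have hadj : (SimpleGraph.fromRel (netRel Γ k (2^k+1))).Adj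
            (Sum.inr ⟨(x, a), h⟩) (Sum.inr ⟨(x', a), h2'⟩) := by
          rw [SimpleGraph.fromRel_adj]
          refine ⟨?_, Or.inl (Or.inr ⟨rfl, rfl⟩)⟩
          intro hc
          rw [Sum.inr.injEq, Subtype.mk.injEq, Prod.mk.injEq] at hc
          have : x.val = x.val + 1 := congrArg Fin.val hc.1
          omega
        obtain ⟨w, hw⟩ := ih x' a h2' (by omega)
        refine ⟨SimpleGraph.Walk.cons hadj w, ?_⟩
        rw [SimpleGraph.Walk.length_cons]
        omega
      · -- a not divisible by next power: step back then up
        obtain ⟨m, hm⟩ := id h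
        have hmodd : ¬ (2 ∣ m) := by
          intro ⟨t, ht⟩
          apply h2
          exact ⟨t, by rw [hm, ht]; ring⟩
        have hm1 : 1 ≤ m := by
          rcases Nat.eq_zero_or_pos m with h0 | h0
          · exact absurd (h0 ▸ ⟨0, rfl⟩ : 2 ∣ m) hmodd
          · exact h0
        have hble : 2 ^ (x.val + 1) ≤ a.val := by
          calc 2 ^ (x.val + 1) = 2 ^ (x.val + 1) * 1 := by ring
          _ ≤ 2 ^ (x.val + 1) * m := Nat.mul_le_mul_left _ hm1
          _ = a.val := hm.symm
        set b : Fin (2^k+1) := ⟨a.val - 2 ^ (x.val + 1), Nat.lt_of_le_of_lt (Nat.sub_le _ _) a.isLt⟩ with hbdef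
        have hb2 : 2 ^ (x.val + 2) ∣ b.val := by
          obtain ⟨t, ht⟩ : 2 ∣ m - 1 := by omega
          refine ⟨t, ?_⟩
          show a.val - 2 ^ (x.val + 1) = 2 ^ (x.val + 2) * t
          have hmt : m = 2 * t + 1 := by omega
          have h5 : 2 ^ (x.val + 2) = 2 ^ (x.val + 1) * 2 := by rw [pow_succ]
          rw [hm, hmt, h5]
          have h6 : 2 ^ (x.val+1) * (2*t+1) = 2 ^ (x.val+1) * 2 * t + 2 ^ (x.val+1) := by ring
          rw [h6, Nat.add_sub_cancel]
        have hb1 : 2 ^ (x.val + 1) ∣ b.val := dvd_trans (pow_dvd_pow 2 (by omega)) hb2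
        have hb2' : 2 ^ (x'.val + 1) ∣ b.val := hb2
        have hadj1 : (SimpleGraph.fromRel (netRel Γ k (2^k+1))).Adj
            (Sum.inr ⟨(x, a), h⟩) (Sum.inr ⟨(x, b), hb1⟩) := by
          rw [SimpleGraph.fromRel_adj]
          refine ⟨?_, Or.inr (Or.inl ⟨rfl, ?_⟩)⟩
          · intro hc
            rw [Sum.inr.injEq, Subtype.mk.injEq, Prod.mk.injEq] at hc
            have hc2 : a.val = a.val - 2 ^ (x.val + 1) := congrArg Fin.val hc.2
            have : 1 ≤ 2 ^ (x.val + 1) := Nat.one_le_two_pow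
            omega
          · show a.val - 2 ^ (x.val + 1) + 2 ^ (x.val + 1) = a.val
            omega
        have hadj2 : (SimpleGraph.fromRel (netRel Γ k (2^k+1))).Adj
            (Sum.inr ⟨(x, b), hb1⟩) (Sum.inr ⟨(x', b), hb2'⟩) := by
          rw [SimpleGraph.fromRel_adj]
          refine ⟨?_, Or.inl (Or.inr ⟨rfl, rfl⟩)⟩
          intro hc
          rw [Sum.inr.injEq, Subtype.mk.injEq, Prod.mk.injEq] at hc
          have : x.val = x.val + 1 := congrArg Fin.val hc.1
          omega
        obtain ⟨w, hw⟩ := ih x' b hb2' (by omega)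
        refine ⟨SimpleGraph.Walk.cons hadj1 (SimpleGraph.Walk.cons hadj2 w), ?_⟩
        simp only [SimpleGraph.Walk.length_cons]
        omega

lemma net_toHub (Γ k : ℕ) (hk : 1 ≤ k) (v : NetV Γ k (2^k+1)) :
    ∃ w : (SimpleGraph.fromRel (netRel Γ k (2^k+1))).Walk v (netHub Γ k hk),
      w.length ≤ 2 * k + 1 := by
  have hp : 1 ≤ 2^k := Nat.one_le_two_pow
  have evenCase : ∀ (i : Fin Γ) (a : Fin (2^k+1)), 2 ∣ a.val →
      ∃ w : (SimpleGraph.fromRel (netRel Γ k (2^k+1))).Walk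
        (Sum.inl (i, a)) (netHub Γ k hk), w.length ≤ 2 * k := by
    intro i a h2
    have h1 : 2 ^ ((⟨0, hk⟩ : Fin k).val + 1) ∣ a.val := by simpa using h2
    have hadj : (SimpleGraph.fromRel (netRel Γ k (2^k+1))).Adj
        (Sum.inl (i, a)) (Sum.inr ⟨((⟨0, hk⟩ : Fin k), a), h1⟩) := by
      rw [SimpleGraph.fromRel_adj]
      exact ⟨by simp, Or.inr ⟨rfl, rfl⟩⟩
    obtain ⟨w, hw⟩ := net_key Γ k hk k ⟨0, hk⟩ a h1 (by omega)
    refine ⟨SimpleGraph.Walk.cons hadj w, ?_⟩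
    rw [SimpleGraph.Walk.length_cons]
    simp only [Fin.val_mk] at hw ⊢
    omega
  match v with
  | Sum.inr ⟨(x1, a), hx⟩ =>
    obtain ⟨w, hw⟩ := net_key Γ k hk k x1 a hx (by omega)
    exact ⟨w, by omega⟩
  | Sum.inl (i, a) =>
    by_cases h2 : 2 ∣ a.val
    · obtain ⟨w, hw⟩ := evenCase i a h2
      exact ⟨w, by omega⟩
    · have ha1 : 1 ≤ a.val := by omega
      set a' : Fin (2^k+1) := ⟨a.val - 1, Nat.lt_of_le_of_lt (Nat.sub_le _ _) a.isLt⟩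
        with ha'
      have hadj : (SimpleGraph.fromRel (netRel Γ k (2^k+1))).Adj
          (Sum.inl (i, a)) (Sum.inl (i, a')) := by
        rw [SimpleGraph.fromRel_adj]
        refine ⟨?_, Or.inr ⟨rfl, by show a.val - 1 + 1 = a.val; omega⟩⟩
        intro hc
        rw [Sum.inl.injEq, Prod.mk.injEq] at hc
        have : a.val = a.val - 1 := congrArg Fin.val hc.2
        omega
      obtain ⟨w, hw⟩ := evenCase i a' (by show 2 ∣ a.val - 1; omega)
      refine ⟨SimpleGraph.Walk.cons hadj w, ?_⟩
      rw [SimpleGraph.Walk.length_cons]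
      omega

theorem network_card_connected_diam
    (Γ k : ℕ) (hk : 1 ≤ k) (hΓ : 1 ≤ Γ) (L : ℕ) (hL : L = 2 ^ k + 1)
    (N : SimpleGraph (NetV Γ k L))
    (hN : N = SimpleGraph.fromRel (netRel Γ k L)) :
    Fintype.card (NetV Γ k L) = Γ * (2 ^ k + 1) + 2 ^ k + k - 1 ∧
    N.Connected ∧ N.diam ≤ 4 * k + 2 := by
  subst hL hN
  refine ⟨net_card Γ k hk, ?_, ?_⟩
  · rw [SimpleGraph.connected_iff]
    refine ⟨?_, ⟨netHub Γ k hk⟩⟩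
    intro u v
    obtain ⟨wu, _⟩ := net_toHub Γ k hk u
    obtain ⟨wv, _⟩ := net_toHub Γ k hk v
    exact ⟨wu.append wv.reverse⟩
  · have hediam : (SimpleGraph.fromRel (netRel Γ k (2^k+1))).ediam ≤ (4 * k + 2 : ℕ) := by
      apply SimpleGraph.ediam_le_of_edist_le
      intro u v
      obtain ⟨wu, hwu⟩ := net_toHub Γ k hk u
      obtain ⟨wv, hwv⟩ := net_toHub Γ k hk v
      calc (SimpleGraph.fromRel (netRel Γ k (2^k+1))).edist u v
          ≤ (wu.append wv.reverse).length := SimpleGraph.edist_le _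
        _ ≤ (4 * k + 2 : ℕ) := by
            rw [SimpleGraph.Walk.length_append, SimpleGraph.Walk.length_reverse]
            exact_mod_cast (by omega : wu.length + wv.length ≤ 4 * k + 2)
    have := ENat.toNat_le_toNat hediam (ENat.coe_ne_top _)
    rw [ENat.toNat_coe] at this
    simpa [SimpleGraph.diam] using this
end
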